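/- arXiv:2012.03398 — 2 statements merged into one kernel-verified Lean document; each statement's English description precedes it below -/
import Mathlib

section
/- Let n ≥ 3, (T, Σ, ⟠) an n-angulated category, A a full subcategory closed under extensions, E an almost n-exact structure for A, and let f: A₁ → B₂ and g: B₂ → A₂ be morphisms in A. (1) If f is a D_A-inflation and gf is an E-inflation, then f is an E-inflation. (2) If g is a D_A-deflation and gf is an E-deflation, then g is an E-deflation. -/
/-!
Common framework: `n`-angulated categories (Geiss–Keller–Oppermann), almost `n`-exact
structures on an extension closed subcategory, ideals, phantom ideals, (special)
precovers/preenvelopes, relative phantoms, pullback/pushout almost `n`-exact structures.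
-/

open CategoryTheory CategoryTheory.Limits ZeroObject

universe v u

namespace IdealApprox

/-- An `n`-`Σ`-sequence `A₁ → A₂ → ⋯ → Aₙ → ΣA₁` in `T`.  The objects are
`obj 0, …, obj (n-1)`; `mor i : obj i ⟶ obj (i+1)` for `i ≤ n - 2` are the structure
morphisms (indices `≥ n - 1` are junk), and `phantom : obj (n-1) ⟶ S.obj (obj 0)`
is the last morphism `αₙ`. -/
structure NSeq (n : ℕ) (T : Type u) [Category.{v} T] (S : T ⥤ T) where
  obj : ℕ → T
  mor : ∀ i : ℕ, obj i ⟶ obj (i + 1)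
  phantom : obj (n - 1) ⟶ S.obj (obj 0)

/-- A morphism of `n`-`Σ`-sequences. -/
structure NSeqHom {n : ℕ} {T : Type u} [Category.{v} T] {S : T ⥤ T}
    (d e : NSeq n T S) where
  app : ∀ i : ℕ, d.obj i ⟶ e.obj i
  comm : ∀ i : ℕ, i + 2 ≤ n → app i ≫ e.mor i = d.mor i ≫ app (i + 1)
  comm_phantom : app (n - 1) ≫ e.phantom = d.phantom ≫ S.map (app 0)

section Defs

variable {n : ℕ} {T : Type u} [Category.{v} T] [Preadditive T] [HasZeroObject T]
  [HasBinaryBiproducts T] {S : T ⥤ T}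

/-- The componentwise direct sum of two `n`-`Σ`-sequences. -/
noncomputable def biprodSeq (d e : NSeq n T S) : NSeq n T S where
  obj i := d.obj i ⊞ e.obj i
  mor i := biprod.map (d.mor i) (e.mor i)
  phantom := biprod.desc (d.phantom ≫ S.map biprod.inl) (e.phantom ≫ S.map biprod.inr)

/-- The trivial `n`-`Σ`-sequence `A = A → 0 → ⋯ → 0 → ΣA`. -/
noncomputable def trivialNSeq (A : T) : NSeq n T S where
  obj i := match i with
    | 0 => A
    | 1 => A
    | _ + 2 => 0
  mor i := match i with
    | 0 => 𝟙 A
    | _ + 1 => 0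
  phantom := 0

/-- `e` is the left rotation `A₂ → A₃ → ⋯ → Aₙ → ΣA₁ → ΣA₂` (with last morphism
`(-1)ⁿ Σα₁`) of `d`. -/
structure IsLeftRotation (d e : NSeq n T S) : Prop where
  hn : 3 ≤ n
  obj_eq : ∀ i : ℕ, i + 2 ≤ n → e.obj i = d.obj (i + 1)
  obj_last : e.obj (n - 1) = S.obj (d.obj 0)
  mor_eq : ∀ (i : ℕ) (h3 : i + 3 ≤ n),
    e.mor i = eqToHom (obj_eq i (by omega)) ≫ d.mor (i + 1) ≫
      eqToHom (obj_eq (i + 1) (by omega)).symm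
  mor_last : e.mor (n - 2) =
    eqToHom ((obj_eq (n - 2) (by omega)).trans
        (congrArg d.obj (by omega : n - 2 + 1 = n - 1))) ≫
      d.phantom ≫
      eqToHom (obj_last.symm.trans (congrArg e.obj (by omega : n - 1 = n - 2 + 1)))
  phantom_eq : e.phantom =
    eqToHom obj_last ≫ ((-1 : ℤ) ^ n • S.map (d.mor 0)) ≫
      eqToHom (congrArg S.obj (obj_eq 0 (by omega)).symm)

/-- `c` is the mapping cone of the morphism `φ : d ⟶ e` of `n`-`Σ`-sequences, i.e.
`c` has objects `A_{i+1} ⊞ B_i` and the matrix morphisms `[(-α, 0), (φ, β)]`. -/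
structure IsCone {d e : NSeq n T S} (φ : NSeqHom d e) (c : NSeq n T S) : Prop where
  hn : 3 ≤ n
  obj_eq : ∀ i : ℕ, i + 2 ≤ n → c.obj i = (d.obj (i + 1) ⊞ e.obj i)
  obj_last : c.obj (n - 1) = (S.obj (d.obj 0) ⊞ e.obj (n - 1))
  mor_eq : ∀ (i : ℕ) (h3 : i + 3 ≤ n),
    c.mor i = eqToHom (obj_eq i (by omega)) ≫
      (biprod.map (-(d.mor (i + 1))) (e.mor i) +
        biprod.fst ≫ φ.app (i + 1) ≫ biprod.inr) ≫
      eqToHom (obj_eq (i + 1) (by omega)).symm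
  mor_last : c.mor (n - 2) =
    eqToHom (obj_eq (n - 2) (by omega)) ≫
      (biprod.map (eqToHom (congrArg d.obj (by omega : n - 2 + 1 = n - 1)) ≫
          (-(d.phantom))) (e.mor (n - 2)) +
        biprod.fst ≫ eqToHom (congrArg d.obj (by omega : n - 2 + 1 = n - 1)) ≫
          φ.app (n - 1) ≫ eqToHom (congrArg e.obj (by omega : n - 1 = n - 2 + 1)) ≫
          biprod.inr) ≫
      eqToHom (show (S.obj (d.obj 0) ⊞ e.obj (n - 2 + 1)) = c.obj (n - 2 + 1) by
        rw [show n - 2 + 1 = n - 1 from by omega]; exact obj_last.symm)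
  phantom_eq : c.phantom =
    eqToHom obj_last ≫
      biprod.desc ((-(S.map (d.mor 0))) ≫ S.map biprod.inl +
          S.map (φ.app 0) ≫ S.map biprod.inr)
        (e.phantom ≫ S.map biprod.inr) ≫
      eqToHom (congrArg S.obj (obj_eq 0 (by omega)).symm)

/-- The axioms (F1)–(F4) for a class `Ang` of `n`-`Σ`-sequences to be an
`n`-angulation of `(T, S)`; the members of `Ang` are the `n`-angles. -/
structure IsNAngulated (Ang : Set (NSeq n T S)) : Prop where
  /-- (F1)(a): closed under direct sums. -/
  biprod_mem : ∀ d e : NSeq n T S, d ∈ Ang → e ∈ Ang → biprodSeq d e ∈ Ang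
  /-- (F1)(a): closed under direct summands. -/
  summand_mem : ∀ d e : NSeq n T S, e ∈ Ang →
    (∃ (f : NSeqHom d e) (g : NSeqHom e d), ∀ i, f.app i ≫ g.app i = 𝟙 (d.obj i)) →
    d ∈ Ang
  /-- (F1)(b): contains the trivial sequences. -/
  trivial_mem : ∀ A : T, (trivialNSeq A : NSeq n T S) ∈ Ang
  /-- (F1)(c): every morphism is the first morphism of some `n`-angle. -/
  complete : ∀ {X Y : T} (f : X ⟶ Y), ∃ d ∈ Ang, ∃ (h0 : d.obj 0 = X) (h1 : d.obj 1 = Y),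
    d.mor 0 = eqToHom h0 ≫ f ≫ eqToHom h1.symm
  /-- (F2): closed under rotation, in both directions. -/
  rotate : ∀ d e : NSeq n T S, IsLeftRotation d e → (d ∈ Ang ↔ e ∈ Ang)
  /-- (F3)+(F4): any commutative square on the first morphisms of two `n`-angles
  extends to a morphism of `n`-angles whose mapping cone is again an `n`-angle. -/
  fill : ∀ d e : NSeq n T S, d ∈ Ang → e ∈ Ang →
    ∀ (f0 : d.obj 0 ⟶ e.obj 0) (f1 : d.obj 1 ⟶ e.obj 1),
      f0 ≫ e.mor 0 = d.mor 0 ≫ f1 →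
      ∃ φ : NSeqHom d e, φ.app 0 = f0 ∧ φ.app 1 = f1 ∧ ∃ c ∈ Ang, IsCone φ c

/-- All (meaningful) objects of the sequence `d` belong to the subcategory `A`. -/
def objsIn (A : Set T) (d : NSeq n T S) : Prop := ∀ i : ℕ, i < n → d.obj i ∈ A

/-- The class `D_A` of `n`-angles all of whose objects lie in `A`. -/
def DA (Ang : Set (NSeq n T S)) (A : Set T) : Set (NSeq n T S) :=
  {d | d ∈ Ang ∧ objsIn A d}

/-- The full subcategory `A` is closed under extensions in `(T, S, Ang)`. -/
def ClosedUnderExtensions (Ang : Set (NSeq n T S)) (A : Set T) : Prop :=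
  ∀ d ∈ Ang, d.obj 0 ∈ A → d.obj (n - 1) ∈ A → objsIn A d

/-- An almost `n`-exact structure `E ⊆ D_A` for `A`: (N1) closed under direct sums and
containing all split `n`-angles, (N2) closed under base change, (N3) closed under
cobase change. -/
structure IsAlmostNExact (Ang : Set (NSeq n T S)) (A : Set T)
    (E : Set (NSeq n T S)) : Prop where
  subset_DA : E ⊆ DA Ang A
  sum_mem : ∀ d e : NSeq n T S, d ∈ E → e ∈ E → biprodSeq d e ∈ E
  split_mem : ∀ d ∈ DA Ang A, d.phantom = 0 → d ∈ E
  base_change : ∀ d ∈ E, ∀ e ∈ DA Ang A, ∀ (φ : NSeqHom e d) (h : e.obj 0 = d.obj 0),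
    φ.app 0 = eqToHom h → e ∈ E
  cobase_change : ∀ d ∈ E, ∀ e ∈ DA Ang A,
    ∀ (φ : NSeqHom d e) (h : d.obj (n - 1) = e.obj (n - 1)),
      φ.app (n - 1) = eqToHom h → e ∈ E

/-- The class `Φ(E)` of `E`-phantoms, i.e. last morphisms of `n`-angles in `E`. -/
def phant (E : Set (NSeq n T S)) : MorphismProperty T := fun X Y f =>
  ∃ d ∈ E, ∃ (hX : d.obj (n - 1) = X) (hY : S.obj (d.obj 0) = Y),
    f = eqToHom hX.symm ≫ d.phantom ≫ eqToHom hY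

/-- `f` is an `E`-inflation, i.e. the first morphism of some `n`-angle in `E`. -/
def IsInfl (E : Set (NSeq n T S)) {X Y : T} (f : X ⟶ Y) : Prop :=
  ∃ d ∈ E, ∃ (h0 : d.obj 0 = X) (h1 : d.obj 1 = Y),
    f = eqToHom h0.symm ≫ d.mor 0 ≫ eqToHom h1

/-- `f` is an `E`-deflation, i.e. the `(n-1)`-st morphism of some `n`-angle in `E`. -/
def IsDefl (E : Set (NSeq n T S)) {X Y : T} (f : X ⟶ Y) : Prop :=
  ∃ d ∈ E, ∃ (h0 : d.obj (n - 2) = X) (h1 : d.obj (n - 2 + 1) = Y),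
    f = eqToHom h0.symm ≫ d.mor (n - 2) ≫ eqToHom h1

/-- The ideal `E-proj` of `E`-projective morphisms of `A`: morphisms factoring
through every `E`-deflation with the appropriate target. -/
def EProj (A : Set T) (E : Set (NSeq n T S)) : MorphismProperty T := fun X Z f =>
  X ∈ A ∧ Z ∈ A ∧ ∀ ⦃P : T⦄ (p : P ⟶ Z), IsDefl E p → ∃ g : X ⟶ P, g ≫ p = f

/-- The ideal `E-inj` of `E`-injective morphisms of `A`: morphisms factoring
through every `E`-inflation with the appropriate source. -/
def EInj (A : Set T) (E : Set (NSeq n T S)) : MorphismProperty T := fun Z Y f =>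
  Z ∈ A ∧ Y ∈ A ∧ ∀ ⦃Q : T⦄ (m : Z ⟶ Q), IsInfl E m → ∃ g : Q ⟶ Y, m ≫ g = f

/-- An ideal in the full subcategory `A`: a class of morphisms of `A` closed under
sums of parallel morphisms and under composition with arbitrary morphisms of `A`. -/
structure IsIdeal (A : Set T) (I : MorphismProperty T) : Prop where
  src_mem : ∀ ⦃X Y : T⦄ (f : X ⟶ Y), I f → X ∈ A
  tgt_mem : ∀ ⦃X Y : T⦄ (f : X ⟶ Y), I f → Y ∈ A
  add_mem : ∀ ⦃X Y : T⦄ (f g : X ⟶ Y), I f → I g → I (f + g)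
  comp_mem : ∀ ⦃W X Y Z : T⦄ (f : W ⟶ X) (i : X ⟶ Y) (g : Y ⟶ Z),
    W ∈ A → Z ∈ A → I i → I (f ≫ i ≫ g)

/-- A phantom `A`-ideal: a class of morphisms `X → ΣB` with `X, B ∈ A`, closed under
sums and under `(Σg) ∘ φ ∘ f` for morphisms `f, g` of `A`. -/
structure IsPhantomIdeal (S : T ⥤ T) (A : Set T) (P : MorphismProperty T) : Prop where
  mem : ∀ ⦃X Y : T⦄ (φ : X ⟶ Y), P φ → X ∈ A ∧ ∃ B ∈ A, Y = S.obj B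
  add_mem : ∀ ⦃X Y : T⦄ (φ ψ : X ⟶ Y), P φ → P ψ → P (φ + ψ)
  comp_mem : ∀ ⦃X' X B B' : T⦄ (f : X' ⟶ X) (φ : X ⟶ S.obj B) (g : B ⟶ B'),
    X' ∈ A → X ∈ A → B ∈ A → B' ∈ A → P φ → P (f ≫ φ ≫ S.map g)

/-- `i` is an `I`-precover (of its target). -/
def IsPrecover (I : MorphismProperty T) {X A₀ : T} (i : X ⟶ A₀) : Prop :=
  I i ∧ ∀ ⦃X' : T⦄ (i' : X' ⟶ A₀), I i' → ∃ g : X' ⟶ X, g ≫ i = i'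

/-- `j` is an `I`-preenvelope (of its source). -/
def IsPreenvelope (I : MorphismProperty T) {B Y : T} (j : B ⟶ Y) : Prop :=
  I j ∧ ∀ ⦃Y' : T⦄ (j' : B ⟶ Y'), I j' → ∃ g : Y ⟶ Y', j ≫ g = j'

/-- The ideal `I` is precovering: every object of `A` has an `I`-precover. -/
def Precovering (A : Set T) (I : MorphismProperty T) : Prop :=
  ∀ A₀ ∈ A, ∃ (X : T) (i : X ⟶ A₀), IsPrecover I i

/-- The ideal `I` is preenveloping: every object of `A` has an `I`-preenvelope. -/
def Preenveloping (A : Set T) (I : MorphismProperty T) : Prop :=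
  ∀ B ∈ A, ∃ (Y : T) (j : B ⟶ Y), IsPreenvelope I j

/-- A phantom `A`-ideal `P` is precovering: every `ΣA₀` (`A₀ ∈ A`) has a `P`-precover. -/
def PhantPrecovering (S : T ⥤ T) (A : Set T) (P : MorphismProperty T) : Prop :=
  ∀ A₀ ∈ A, ∃ (X : T) (φ : X ⟶ S.obj A₀), IsPrecover P φ

/-- A phantom `A`-ideal `P` is preenveloping: every `B ∈ A` has a `P`-preenvelope. -/
def PhantPreenveloping (S : T ⥤ T) (A : Set T) (P : MorphismProperty T) : Prop :=
  ∀ B ∈ A, ∃ (Y : T) (φ : B ⟶ S.obj Y), IsPreenvelope P φ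

/-- There are enough `E`-injective morphisms: every object of `A` admits an
`E`-injective `E`-inflation out of it. -/
def EnoughInjectives (A : Set T) (E : Set (NSeq n T S)) : Prop :=
  ∀ A₀ ∈ A, ∃ (E₀ : T) (e : A₀ ⟶ E₀), IsInfl E e ∧ EInj A E e

/-- There are enough `E`-projective morphisms: every object of `A` admits an
`E`-projective `E`-deflation onto it. -/
def EnoughProjectives (A : Set T) (E : Set (NSeq n T S)) : Prop :=
  ∀ C ∈ A, ∃ (P : T) (p : P ⟶ C), IsDefl E p ∧ EProj A E p

/-- `f ⊥ g` with respect to `E`: `(Σg) φ f = 0` for all `E`-phantoms `φ`. -/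
def OrthRel (E : Set (NSeq n T S)) {X Z B Y : T} (f : X ⟶ Z) (g : B ⟶ Y) : Prop :=
  ∀ φ : Z ⟶ S.obj B, phant E φ → f ≫ φ ≫ S.map g = 0

/-- The right orthogonal ideal `M^⊥` (with respect to `E`) of a class of morphisms. -/
def perpRight (A : Set T) (E : Set (NSeq n T S)) (M : MorphismProperty T) :
    MorphismProperty T := fun B Y g =>
  B ∈ A ∧ Y ∈ A ∧ ∀ ⦃X Z : T⦄ (m : X ⟶ Z), M m → OrthRel E m g

/-- The left orthogonal ideal `⊥M` (with respect to `E`) of a class of morphisms. -/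
def perpLeft (A : Set T) (E : Set (NSeq n T S)) (M : MorphismProperty T) :
    MorphismProperty T := fun X Z f =>
  X ∈ A ∧ Z ∈ A ∧ ∀ ⦃B Y : T⦄ (m : B ⟶ Y), M m → OrthRel E f m

/-- `i : X ⟶ A₀` is a special `I`-precover with respect to `E`. -/
def IsSpecialPrecover (A : Set T) (E : Set (NSeq n T S)) (I : MorphismProperty T)
    {X A₀ : T} (i : X ⟶ A₀) : Prop :=
  I i ∧ ∃ d ∈ E, ∃ (hX : d.obj (n - 2) = X) (hA : d.obj (n - 2 + 1) = A₀),
    i = eqToHom hX.symm ≫ d.mor (n - 2) ≫ eqToHom hA ∧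
    ∃ (B : T) (φ : d.obj (n - 1) ⟶ S.obj B) (j : B ⟶ d.obj 0),
      phant E φ ∧ perpRight A E I j ∧ d.phantom = φ ≫ S.map j

/-- `j : B₀ ⟶ Y` is a special `J`-preenvelope with respect to `E`. -/
def IsSpecialPreenvelope (A : Set T) (E : Set (NSeq n T S)) (J : MorphismProperty T)
    {B₀ Y : T} (j : B₀ ⟶ Y) : Prop :=
  J j ∧ ∃ d ∈ E, ∃ (hB : d.obj 0 = B₀) (hY : d.obj 1 = Y),
    j = eqToHom hB.symm ≫ d.mor 0 ≫ eqToHom hY ∧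
    ∃ (C : T) (i : d.obj (n - 1) ⟶ C) (φ : C ⟶ S.obj (d.obj 0)),
      perpLeft A E J i ∧ phant E φ ∧ d.phantom = i ≫ φ

/-- The ideal `I` is special precovering with respect to `E`. -/
def SpecialPrecovering (A : Set T) (E : Set (NSeq n T S))
    (I : MorphismProperty T) : Prop :=
  ∀ A₀ ∈ A, ∃ (X : T) (i : X ⟶ A₀), IsSpecialPrecover A E I i

/-- The ideal `J` is special preenveloping with respect to `E`. -/
def SpecialPreenveloping (A : Set T) (E : Set (NSeq n T S))
    (J : MorphismProperty T) : Prop :=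
  ∀ B ∈ A, ∃ (Y : T) (j : B ⟶ Y), IsSpecialPreenvelope A E J j

/-- `(I, J)` is an ideal cotorsion pair with respect to `E`: `J = I^⊥` and `I = ⊥J`. -/
def IsIdealCotorsionPair (A : Set T) (E : Set (NSeq n T S))
    (I J : MorphismProperty T) : Prop :=
  J = perpRight A E I ∧ I = perpLeft A E J

/-- The ideal `Φ_E(F)` of `F`-phantoms relative to `E`. -/
def relPhant (A : Set T) (E F : Set (NSeq n T S)) : MorphismProperty T := fun X Z f =>
  X ∈ A ∧ Z ∈ A ∧ ∀ ⦃B : T⦄ (h : Z ⟶ S.obj B), phant E h → phant F (f ≫ h)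

/-- The ideal `Φ^E(F)` of `F`-cophantoms relative to `E`. -/
def relCophant (A : Set T) (E F : Set (NSeq n T S)) : MorphismProperty T := fun Z Y f =>
  Z ∈ A ∧ Y ∈ A ∧ ∀ ⦃W : T⦄ (h : W ⟶ Z), phant E (S.map h) → phant F (S.map (h ≫ f))

/-- The pullback almost `n`-exact structure `PB_E(I)` associated to an ideal `I`:
`n`-angles in `E` whose phantom factors as `ψ ∘ i` with `i ∈ I`, `ψ ∈ Φ(E)`. -/
def PB (E : Set (NSeq n T S)) (I : MorphismProperty T) : Set (NSeq n T S) :=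
  {d | d ∈ E ∧ ∃ (C : T) (i : d.obj (n - 1) ⟶ C) (ψ : C ⟶ S.obj (d.obj 0)),
    I i ∧ phant E ψ ∧ d.phantom = i ≫ ψ}

/-- The pushout almost `n`-exact structure `PO_E(J)` associated to an ideal `J`:
`n`-angles in `E` whose phantom factors as `(Σj) ∘ ψ` with `j ∈ J`, `ψ ∈ Φ(E)`. -/
def PO (E : Set (NSeq n T S)) (J : MorphismProperty T) : Set (NSeq n T S) :=
  {d | d ∈ E ∧ ∃ (B : T) (ψ : d.obj (n - 1) ⟶ S.obj B) (j : B ⟶ d.obj 0),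
    phant E ψ ∧ J j ∧ d.phantom = ψ ≫ S.map j}

/-- `E^I`: the `n`-angles from `A` whose phantom `φ` satisfies `(Σi) φ = 0` for
all `i ∈ I`. -/
def EUp (Ang : Set (NSeq n T S)) (A : Set T) (I : MorphismProperty T) :
    Set (NSeq n T S) :=
  {d | d ∈ DA Ang A ∧ ∀ ⦃Y : T⦄ (i : d.obj 0 ⟶ Y), I i → d.phantom ≫ S.map i = 0}

/-- `E_I`: the `n`-angles from `A` whose phantom `φ` satisfies `φ i = 0` for
all `i ∈ I`. -/
def EDown (Ang : Set (NSeq n T S)) (A : Set T) (I : MorphismProperty T) :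
    Set (NSeq n T S) :=
  {d | d ∈ DA Ang A ∧ ∀ ⦃X : T⦄ (i : X ⟶ d.obj (n - 1)), I i → i ≫ d.phantom = 0}

/-- `D_A(P)`: the `n`-angles from `A` whose phantom lies in `P`. -/
def DAI (Ang : Set (NSeq n T S)) (A : Set T) (P : MorphismProperty T) :
    Set (NSeq n T S) :=
  {d | d ∈ DA Ang A ∧ P d.phantom}

/-- `e : A₀ ⟶ E₀` is a special `H`-injective morphism with respect to `E`: it is
`H`-injective and embeds as the first morphism of an `n`-angle from `A` admitting a
morphism of `n`-angles, with identity ends, to an `n`-angle in `E` whose component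
at position `n` lies in `Φ_E(H)`. -/
def IsSpecialInj (Ang : Set (NSeq n T S)) (A : Set T) (E H : Set (NSeq n T S))
    {A₀ E₀ : T} (e : A₀ ⟶ E₀) : Prop :=
  EInj A H e ∧ ∃ d' ∈ DA Ang A, ∃ (h0 : d'.obj 0 = A₀) (h1 : d'.obj 1 = E₀),
    e = eqToHom h0.symm ≫ d'.mor 0 ≫ eqToHom h1 ∧
    ∃ d ∈ E, ∃ (φ : NSeqHom d' d) (hh : d'.obj 0 = d.obj 0),
      φ.app 0 = eqToHom hh ∧ relPhant A E H (φ.app (n - 1))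

/-- `p : P₀ ⟶ C` is a special `H`-projective morphism with respect to `E` (dual of
`IsSpecialInj`). -/
def IsSpecialProj (Ang : Set (NSeq n T S)) (A : Set T) (E H : Set (NSeq n T S))
    {P₀ C : T} (p : P₀ ⟶ C) : Prop :=
  EProj A H p ∧ ∃ d' ∈ DA Ang A, ∃ (h0 : d'.obj (n - 2) = P₀) (h1 : d'.obj (n - 2 + 1) = C),
    p = eqToHom h0.symm ≫ d'.mor (n - 2) ≫ eqToHom h1 ∧
    ∃ d ∈ E, ∃ (φ : NSeqHom d d') (hh : d.obj (n - 1) = d'.obj (n - 1)),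
      φ.app (n - 1) = eqToHom hh ∧ relCophant A E H (φ.app 0)

/-- There are enough special `H`-injective morphisms (with respect to `E`). -/
def EnoughSpecialInj (Ang : Set (NSeq n T S)) (A : Set T)
    (E H : Set (NSeq n T S)) : Prop :=
  ∀ A₀ ∈ A, ∃ (E₀ : T) (e : A₀ ⟶ E₀), IsSpecialInj Ang A E H e

/-- There are enough special `H`-projective morphisms (with respect to `E`). -/
def EnoughSpecialProj (Ang : Set (NSeq n T S)) (A : Set T)
    (E H : Set (NSeq n T S)) : Prop :=
  ∀ C ∈ A, ∃ (P₀ : T) (p : P₀ ⟶ C), IsSpecialProj Ang A E H p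

end Defs

end IdealApprox

namespace IdealApprox

set_option linter.unusedSectionVars false
section Rot

variable {m : ℕ} {T : Type u} [Category.{v} T] [Preadditive T] [HasZeroObject T]
  [HasBinaryBiproducts T] {S : T ⥤ T}

/-- Objects of the left rotation. -/
def rotObj (d : NSeq (m + 3) T S) (i : ℕ) : T :=
  if i = m + 2 then S.obj (d.obj 0) else d.obj (i + 1)

lemma rotObj_eq (d : NSeq (m + 3) T S) {i : ℕ} (h : i + 2 ≤ m + 3) :
    rotObj d i = d.obj (i + 1) := if_neg (by omega)

lemma rotObj_last (d : NSeq (m + 3) T S) : rotObj d (m + 2) = S.obj (d.obj 0) :=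
  if_pos rfl

/-- The left rotation of an `n`-`Σ`-sequence. -/
@[reducible] noncomputable def rot (d : NSeq (m + 3) T S) : NSeq (m + 3) T S where
  obj := rotObj d
  mor i :=
    if h : i + 3 ≤ m + 3 then
      eqToHom (rotObj_eq d (by omega)) ≫ d.mor (i + 1) ≫
        eqToHom (rotObj_eq d (by omega : i + 1 + 2 ≤ m + 3)).symm
    else if h2 : i = m + 1 then
      eqToHom ((rotObj_eq d (by omega)).trans (congrArg d.obj (by omega))) ≫ d.phantom ≫
        eqToHom ((rotObj_last d).symm.trans (congrArg (rotObj d) (by omega)))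
    else 0
  phantom :=
    eqToHom (rotObj_last d) ≫ ((-1 : ℤ) ^ (m + 3) • S.map (d.mor 0)) ≫
      eqToHom (congrArg S.obj (rotObj_eq d (by omega)).symm)

lemma rot_mor (d : NSeq (m + 3) T S) {i : ℕ} (h : i + 3 ≤ m + 3) :
    (rot d).mor i = eqToHom (rotObj_eq d (by omega)) ≫ d.mor (i + 1) ≫
      eqToHom (rotObj_eq d (by omega : i + 1 + 2 ≤ m + 3)).symm := by
  simp only [rot]
  rw [dif_pos h]

lemma rot_mor_last (d : NSeq (m + 3) T S) :
    (rot d).mor (m + 1) = eqToHom ((rotObj_eq d (by omega)).trans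
        (congrArg d.obj (by omega : m + 1 + 1 = m + 2))) ≫ d.phantom ≫
      eqToHom ((rotObj_last d).symm.trans (congrArg (rotObj d) (by omega : m + 2 = m + 1 + 1))) := by
  simp only [rot]
  rw [dif_neg (by omega), dif_pos trivial]

lemma rot_phantom (d : NSeq (m + 3) T S) :
    (rot d).phantom = eqToHom (rotObj_last d) ≫ ((-1 : ℤ) ^ (m + 3) • S.map (d.mor 0)) ≫
      eqToHom (congrArg S.obj (rotObj_eq d (by omega : 0 + 2 ≤ m + 3)).symm) := rfl

lemma isLeftRotation_rot (d : NSeq (m + 3) T S) : IsLeftRotation d (rot d) where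
  hn := by omega
  obj_eq i h := rotObj_eq d h
  obj_last := rotObj_last d
  mor_eq i h3 := rot_mor d h3
  mor_last := rot_mor_last d
  phantom_eq := rot_phantom d

lemma rot_mem {Ang : Set (NSeq (m + 3) T S)} (hAng : IsNAngulated Ang)
    {d : NSeq (m + 3) T S} (hd : d ∈ Ang) : rot d ∈ Ang :=
  (hAng.rotate d (rot d) (isLeftRotation_rot d)).mp hd

end Rot

end IdealApprox

namespace IdealApprox

set_option linter.unusedSectionVars false
set_option maxHeartbeats 1000000

section Unrot

variable {m : ℕ} {T : Type u} [Category.{v} T] [Preadditive T] [HasZeroObject T]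
  [HasBinaryBiproducts T] {S : T ⥤ T}

/-- Components of the unrotation of a morphism between rotated sequences. -/
noncomputable def unrotApp [S.Full] [S.Faithful] {d e : NSeq (m + 3) T S}
    (ψ : NSeqHom (rot d) (rot e)) (i : ℕ) : d.obj i ⟶ e.obj i :=
  if h0 : i = 0 then
    eqToHom (congrArg d.obj h0) ≫
      S.preimage (eqToHom (rotObj_last d).symm ≫ ψ.app (m + 2) ≫ eqToHom (rotObj_last e)) ≫
      eqToHom (congrArg e.obj h0).symm
  else if h : i ≤ m + 2 then
    eqToHom (((rotObj_eq d (by omega : i - 1 + 2 ≤ m + 3)).trans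
        (congrArg d.obj (by omega : i - 1 + 1 = i))).symm) ≫
      ψ.app (i - 1) ≫
      eqToHom ((rotObj_eq e (by omega : i - 1 + 2 ≤ m + 3)).trans
        (congrArg e.obj (by omega : i - 1 + 1 = i)))
  else 0

lemma unrotApp_zero [S.Full] [S.Faithful] {d e : NSeq (m + 3) T S}
    (ψ : NSeqHom (rot d) (rot e)) :
    unrotApp ψ 0 =
      S.preimage (eqToHom (rotObj_last d).symm ≫ ψ.app (m + 2) ≫ eqToHom (rotObj_last e)) := by
  rw [unrotApp, dif_pos rfl]
  simp

lemma unrotApp_ne_zero [S.Full] [S.Faithful] {d e : NSeq (m + 3) T S}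
    (ψ : NSeqHom (rot d) (rot e)) {i : ℕ} (h0 : ¬ i = 0) (h : i ≤ m + 2) :
    unrotApp ψ i =
      eqToHom (((rotObj_eq d (by omega : i - 1 + 2 ≤ m + 3)).trans
          (congrArg d.obj (by omega : i - 1 + 1 = i))).symm) ≫
        ψ.app (i - 1) ≫
        eqToHom ((rotObj_eq e (by omega : i - 1 + 2 ≤ m + 3)).trans
          (congrArg e.obj (by omega : i - 1 + 1 = i))) := by
  rw [unrotApp, dif_neg h0, dif_pos h]

/-- Unrotation of a morphism between rotated sequences. -/
noncomputable def unrot [S.Full] [S.Faithful] {d e : NSeq (m + 3) T S}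
    (ψ : NSeqHom (rot d) (rot e)) : NSeqHom d e where
  app := unrotApp ψ
  comm i hi := by
    rcases i with _ | j
    · -- i = 0
      rw [unrotApp_zero, unrotApp_ne_zero ψ (by omega) (by omega)]
      try simp only [Nat.succ_sub_one, Nat.add_sub_cancel]
      apply S.map_injective
      have hcp : ψ.app (m + 2) ≫
          (eqToHom (rotObj_last e) ≫ ((-1 : ℤ) ^ (m + 3) • S.map (e.mor 0)) ≫
            eqToHom (congrArg S.obj (rotObj_eq e (by omega : 0 + 2 ≤ m + 3)).symm)) =
          (eqToHom (rotObj_last d) ≫ ((-1 : ℤ) ^ (m + 3) • S.map (d.mor 0)) ≫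
            eqToHom (congrArg S.obj (rotObj_eq d (by omega : 0 + 2 ≤ m + 3)).symm)) ≫
            S.map (ψ.app 0) := ψ.comm_phantom
      simp only [Preadditive.comp_zsmul, Preadditive.zsmul_comp] at hcp
      have hA : ψ.app (m + 2) ≫ eqToHom (rotObj_last e) ≫ S.map (e.mor 0) ≫
          eqToHom (congrArg S.obj (rotObj_eq e (by omega : 0 + 2 ≤ m + 3)).symm) =
          eqToHom (rotObj_last d) ≫ S.map (d.mor 0) ≫
            eqToHom (congrArg S.obj (rotObj_eq d (by omega : 0 + 2 ≤ m + 3)).symm) ≫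
            S.map (ψ.app 0) := by
        rcases Nat.even_or_odd (m + 3) with hpar | hpar
        · rw [hpar.neg_one_pow, one_smul, one_smul] at hcp
          simpa [Category.assoc] using hcp
        · rw [hpar.neg_one_pow, neg_one_smul, neg_one_smul, neg_inj] at hcp
          simpa [Category.assoc] using hcp
      simp only [Functor.map_comp, Functor.map_preimage, eqToHom_map]
      rw [← cancel_epi (eqToHom (rotObj_last d)),
        ← cancel_mono (eqToHom (congrArg S.obj (rotObj_eq e (by omega : 0 + 2 ≤ m + 3)).symm))]
      simpa [Category.assoc] using hA
    · -- i = j + 1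
      rw [unrotApp_ne_zero ψ (by omega) (by omega),
        unrotApp_ne_zero ψ (i := j + 1 + 1) (by omega) (by omega)]
      try simp only [Nat.succ_sub_one, Nat.add_sub_cancel]
      have hmd : d.mor (j + 1) = eqToHom (rotObj_eq d (by omega : j + 2 ≤ m + 3)).symm ≫
          (rot d).mor j ≫ eqToHom (rotObj_eq d (by omega : j + 1 + 2 ≤ m + 3)) := by
        rw [rot_mor d (by omega : j + 3 ≤ m + 3)]; simp
      have hme : e.mor (j + 1) = eqToHom (rotObj_eq e (by omega : j + 2 ≤ m + 3)).symm ≫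
          (rot e).mor j ≫ eqToHom (rotObj_eq e (by omega : j + 1 + 2 ≤ m + 3)) := by
        rw [rot_mor e (by omega : j + 3 ≤ m + 3)]; simp
      have hc' := ψ.comm j (by omega)
      rw [hmd, hme]
      simp only [Category.assoc, eqToHom_trans, eqToHom_trans_assoc, eqToHom_refl, Category.id_comp,
        Category.comp_id, reassoc_of% hc']
  comm_phantom := by
    rw [unrotApp_ne_zero ψ (i := m + 3 - 1) (by omega) (by omega), unrotApp_zero,
      Functor.map_preimage]
    have hpe : e.phantom = eqToHom ((rotObj_eq e (by omega : m + 1 + 2 ≤ m + 3)).trans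
          (congrArg e.obj (by omega : m + 1 + 1 = m + 2))).symm ≫
        (rot e).mor (m + 1) ≫
        eqToHom ((rotObj_last e).symm.trans
          (congrArg (rotObj e) (by omega : m + 2 = m + 1 + 1))).symm := by
      rw [rot_mor_last e]; simp
    have hpd : d.phantom = eqToHom ((rotObj_eq d (by omega : m + 1 + 2 ≤ m + 3)).trans
          (congrArg d.obj (by omega : m + 1 + 1 = m + 2))).symm ≫
        (rot d).mor (m + 1) ≫
        eqToHom ((rotObj_last d).symm.trans
          (congrArg (rotObj d) (by omega : m + 2 = m + 1 + 1))).symm := by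
      rw [rot_mor_last d]; simp
    have hc' : ψ.app (m + 3 - 1 - 1) ≫ (rot e).mor (m + 1) =
        (rot d).mor (m + 1) ≫ ψ.app (m + 2) := ψ.comm (m + 1) (by omega)
    rw [hpe, hpd]
    simp only [Category.assoc, eqToHom_trans, eqToHom_trans_assoc, eqToHom_refl, Category.id_comp,
      Category.comp_id, reassoc_of% hc']

lemma unrot_app_succ [S.Full] [S.Faithful] {d e : NSeq (m + 3) T S}
    (ψ : NSeqHom (rot d) (rot e)) {j : ℕ} (h : j + 2 ≤ m + 3) :
    (unrot ψ).app (j + 1) =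
      eqToHom (rotObj_eq d h).symm ≫ ψ.app j ≫ eqToHom (rotObj_eq e h) := by
  show unrotApp ψ (j + 1) = _
  rw [unrotApp_ne_zero ψ (by omega) (by omega : j + 1 ≤ m + 2)]
  try simp only [Nat.succ_sub_one, Nat.add_sub_cancel]

end Unrot

end IdealApprox

namespace IdealApprox

section Fill

set_option linter.unusedSectionVars false
set_option maxHeartbeats 1000000

variable {m : ℕ} {T : Type u} [Category.{v} T] [Preadditive T] [HasZeroObject T]
  [HasBinaryBiproducts T] {S : T ⥤ T}

lemma fillAt [S.Full] [S.Faithful] {Ang : Set (NSeq (m + 3) T S)}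
    (hAng : IsNAngulated Ang) :
    ∀ (k : ℕ), k + 2 ≤ m + 3 → ∀ (d e : NSeq (m + 3) T S), d ∈ Ang → e ∈ Ang →
    ∀ (f0 : d.obj k ⟶ e.obj k) (f1 : d.obj (k + 1) ⟶ e.obj (k + 1)),
      f0 ≫ e.mor k = d.mor k ≫ f1 →
      ∃ φ : NSeqHom d e, φ.app k = f0 ∧ φ.app (k + 1) = f1 := by
  intro k
  induction k with
  | zero =>
    intro _ d e hd he f0 f1 hsq
    obtain ⟨φ, h0, h1, -⟩ := hAng.fill d e hd he f0 f1 hsq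
    exact ⟨φ, h0, h1⟩
  | succ j ih =>
    intro hk d e hd he f0 f1 hsq
    have h2 : j + 2 ≤ m + 3 := by omega
    have h3 : j + 1 + 2 ≤ m + 3 := hk
    have sq' : (eqToHom (rotObj_eq d h2) ≫ f0 ≫ eqToHom (rotObj_eq e h2).symm) ≫
        (rot e).mor j = (rot d).mor j ≫
        (eqToHom (rotObj_eq d h3) ≫ f1 ≫ eqToHom (rotObj_eq e h3).symm) := by
      rw [rot_mor d (by omega : j + 3 ≤ m + 3), rot_mor e (by omega : j + 3 ≤ m + 3)]
      simp only [Category.assoc, eqToHom_trans, eqToHom_trans_assoc, eqToHom_refl,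
        Category.id_comp, Category.comp_id, reassoc_of% hsq]
    obtain ⟨ψ, hψ0, hψ1⟩ := ih (by omega) (rot d) (rot e) (rot_mem hAng hd)
      (rot_mem hAng he) _ _ sq'
    refine ⟨unrot ψ, ?_, ?_⟩
    · rw [unrot_app_succ ψ h2, hψ0]
      simp
    · rw [unrot_app_succ ψ h3, hψ1]
      simp

end Fill

end IdealApprox

set_option maxHeartbeats 1000000

open IdealApprox

/-- If `f` is a `D_A`-inflation and `g ∘ f` an `E`-inflation then `f` is an
`E`-inflation; dually for deflations. -/
theorem stmt_7 {T : Type u} [Category.{v} T] [Preadditive T] [HasZeroObject T]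
    [HasBinaryBiproducts T] (S : T ⥤ T) [S.IsEquivalence] {n : ℕ} (hn : 3 ≤ n)
    (Ang : Set (NSeq n T S)) (hAng : IsNAngulated Ang)
    (A : Set T) (hA : ClosedUnderExtensions Ang A)
    (E : Set (NSeq n T S)) (hE : IsAlmostNExact Ang A E)
    {X Y Z : T} (hX : X ∈ A) (hY : Y ∈ A) (hZ : Z ∈ A) (f : X ⟶ Y) (g : Y ⟶ Z) :
    (IsInfl (DA Ang A) f → IsInfl E (f ≫ g) → IsInfl E f) ∧
    (IsDefl (DA Ang A) g → IsDefl E (f ≫ g) → IsDefl E g) := by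
  obtain ⟨m, rfl⟩ : ∃ m, n = m + 3 := ⟨n - 3, by omega⟩
  constructor
  · rintro ⟨d', hd'DA, h0', h1', hf⟩ ⟨d, hdE, h0, h1, hfg⟩
    have hdAng : d ∈ Ang := (hE.subset_DA hdE).1
    have sq : (eqToHom (h0'.trans h0.symm) : d'.obj 0 ⟶ d.obj 0) ≫ d.mor 0 =
        d'.mor 0 ≫ (eqToHom h1' ≫ g ≫ eqToHom h1.symm) := by
      have e1 : d.mor 0 = eqToHom h0 ≫ (f ≫ g) ≫ eqToHom h1.symm := by
        rw [hfg]; simp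
      have e2 : d'.mor 0 = eqToHom h0' ≫ f ≫ eqToHom h1'.symm := by
        rw [hf]; simp
      rw [e1, e2]; simp
    obtain ⟨φ, hφ0, hφ1, -⟩ := hAng.fill d' d hd'DA.1 hdAng _ _ sq
    have hd'E : d' ∈ E := hE.base_change d hdE d' hd'DA φ (h0'.trans h0.symm) hφ0
    exact ⟨d', hd'E, h0', h1', hf⟩
  · rintro ⟨e', he'DA, he0, he1, hg⟩ ⟨d, hdE, hd0, hd1, hfg⟩
    have hdAng : d ∈ Ang := (hE.subset_DA hdE).1
    have sq : (eqToHom hd0 ≫ f ≫ eqToHom he0.symm) ≫ e'.mor (m + 3 - 2) =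
        d.mor (m + 3 - 2) ≫ (eqToHom (hd1.trans he1.symm) :
          d.obj (m + 3 - 2 + 1) ⟶ e'.obj (m + 3 - 2 + 1)) := by
      have e1 : e'.mor (m + 3 - 2) = eqToHom he0 ≫ g ≫ eqToHom he1.symm := by
        rw [hg]; simp
      have e2 : d.mor (m + 3 - 2) = eqToHom hd0 ≫ (f ≫ g) ≫ eqToHom hd1.symm := by
        rw [hfg]; simp
      rw [e1, e2]; simp
    obtain ⟨φ, -, hφ2⟩ := fillAt hAng (m + 3 - 2) (by omega) d e' hdAng he'DA.1 _ _ sq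
    have he'E : e' ∈ E := hE.cobase_change d hdE e' he'DA φ (hd1.trans he1.symm) hφ2
    exact ⟨e', he'E, he0, he1, hg⟩
end

section
/- Let n ≥ 3, (T, Σ, ⟠) an n-angulated category, A a full subcategory closed under extensions, and let F ⊆ E be almost n-exact structures for A. (1) Let A₁ → ⋯ → Aₙ₋₂ → P →p A →ψ ΣA₁ be an n-angle in E such that p is E-projective. Then a morphism φ: X → A belongs to Φ_E(F) if and only if ψφ belongs to Φ(F). (2) Let A →e E' → A₃ → ⋯ → Aₙ →ψ ΣA be an n-angle in E such that e is E-injective. Then a morphism φ: A → Y belongs to Φ^E(F) if and only if (Σφ)ψ belongs to Φ(F). -/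
/-!
Common framework: `n`-angulated categories (Geiss–Keller–Oppermann), almost `n`-exact
structures on an extension closed subcategory, ideals, phantom ideals, (special)
precovers/preenvelopes, relative phantoms, pullback/pushout almost `n`-exact structures.
-/

open CategoryTheory CategoryTheory.Limits ZeroObject

universe v u

open IdealApprox

attribute [reducible] IdealApprox.biprodSeq

namespace IdealApproxAux

open IdealApprox

universe v' u'
set_option linter.unusedSectionVars false

section Basic

variable {T : Type u'} [Category.{v'} T] [Preadditive T] [HasZeroObject T]
  [HasBinaryBiproducts T] {S : T ⥤ T} {n : ℕ}

lemma eps_mul_eps : ((-1:ℤ)^n) * ((-1:ℤ)^n) = 1 := by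
  rw [← pow_add]; exact Even.neg_one_pow ⟨n, by ring⟩

lemma eps_smul_eps {X Y : T} (f : X ⟶ Y) : ((-1:ℤ)^n) • ((-1:ℤ)^n) • f = f := by
  rw [smul_smul, eps_mul_eps, one_smul]

/-- Replace the objects of an `n`-`Σ`-sequence by isomorphic ones. -/
@[reducible] noncomputable def reshape (a : NSeq n T S) (g : ℕ → T) (σ : ∀ i, g i ≅ a.obj i) :
    NSeq n T S where
  obj := g
  mor i := (σ i).hom ≫ a.mor i ≫ (σ (i+1)).inv
  phantom := (σ (n-1)).hom ≫ a.phantom ≫ S.map (σ 0).inv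

@[simp] lemma reshape_obj (a : NSeq n T S) (g σ) (i : ℕ) : (reshape a g σ).obj i = g i := rfl

lemma reshape_mor (a : NSeq n T S) (g σ) (i : ℕ) :
    (reshape a g σ).mor i = (σ i).hom ≫ a.mor i ≫ (σ (i+1)).inv := rfl

lemma reshape_phantom (a : NSeq n T S) (g σ) :
    (reshape a g σ).phantom = (σ (n-1)).hom ≫ a.phantom ≫ S.map (σ 0).inv := rfl

/-- The canonical morphism `reshape a g σ ⟶ a`. -/
noncomputable def reshapeHomTo (a : NSeq n T S) (g : ℕ → T) (σ : ∀ i, g i ≅ a.obj i) :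
    NSeqHom (reshape a g σ) a where
  app i := (σ i).hom
  comm i _ := by simp [reshape]
  comm_phantom := by
    simp only [reshape]
    slice_rhs 3 4 => rw [← S.map_comp, Iso.inv_hom_id, S.map_id]
    simp

/-- The canonical morphism `a ⟶ reshape a g σ`. -/
noncomputable def reshapeHomFrom (a : NSeq n T S) (g : ℕ → T) (σ : ∀ i, g i ≅ a.obj i) :
    NSeqHom a (reshape a g σ) where
  app i := (σ i).inv
  comm i _ := by simp [reshape]
  comm_phantom := by simp [reshape]

lemma reshape_mem {Ang : Set (NSeq n T S)} (hAng : IsNAngulated Ang)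
    {a : NSeq n T S} (ha : a ∈ Ang) (g : ℕ → T) (σ : ∀ i, g i ≅ a.obj i) :
    reshape a g σ ∈ Ang :=
  hAng.summand_mem _ a ha
    ⟨reshapeHomTo a g σ, reshapeHomFrom a g σ, fun i => by
      simp [reshapeHomTo, reshapeHomFrom]⟩

lemma mor_congr (d : NSeq n T S) {i j : ℕ} (h : i = j) :
    d.mor j = eqToHom (congrArg d.obj h.symm) ≫ d.mor i ≫
      eqToHom (congrArg d.obj (by rw [h])) := by
  subst h; simp

/-- Objects of the left rotation. -/
def rotObj (d : NSeq n T S) (i : ℕ) : T :=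
  if i + 2 ≤ n then d.obj (i+1) else S.obj (d.obj (i+1-n))

lemma rotObj_lt {d : NSeq n T S} {i : ℕ} (h : i + 2 ≤ n) : rotObj d i = d.obj (i+1) :=
  if_pos h

lemma rotObj_last {d : NSeq n T S} (h : 3 ≤ n) : rotObj d (n-1) = S.obj (d.obj 0) := by
  rw [rotObj, if_neg (by omega)]
  have : n - 1 + 1 - n = 0 := by omega
  rw [this]

/-- The left rotation of an `n`-`Σ`-sequence. -/
@[reducible] noncomputable def rot (hn : 3 ≤ n) (d : NSeq n T S) : NSeq n T S where
  obj := rotObj d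
  mor i :=
    if h3 : i + 3 ≤ n then
      eqToHom (rotObj_lt (by omega)) ≫ d.mor (i+1) ≫ eqToHom (rotObj_lt (by omega)).symm
    else if h2 : i + 2 = n then
      eqToHom (show rotObj d i = d.obj (n-1) from by
        rw [rotObj_lt (show i + 2 ≤ n from by omega)]; congr 1; omega) ≫
      d.phantom ≫
      eqToHom (show S.obj (d.obj 0) = rotObj d (i+1) from by
        rw [show i + 1 = n - 1 from by omega, rotObj_last hn]) else 0
  phantom :=
    eqToHom (rotObj_last hn) ≫ (((-1:ℤ)^n) • S.map (d.mor 0)) ≫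
      eqToHom (congrArg S.obj (rotObj_lt (show 0 + 2 ≤ n from by omega)).symm)

lemma isLR_rot (hn : 3 ≤ n) (d : NSeq n T S) : IsLeftRotation d (rot hn d) := by
  refine ⟨hn, fun i h => rotObj_lt h, rotObj_last hn, ?_, ?_, ?_⟩
  · intro i h3
    show (rot hn d).mor i = _
    simp only [rot, dif_pos h3]
  · show (rot hn d).mor (n-2) = _
    simp only [rot]
    rw [dif_neg (by omega), dif_pos (by omega)]
  · show (rot hn d).phantom = _
    simp only [rot]

lemma rot_mem {Ang : Set (NSeq n T S)} (hAng : IsNAngulated Ang) (hn : 3 ≤ n)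
    (d : NSeq n T S) : d ∈ Ang ↔ rot hn d ∈ Ang :=
  hAng.rotate d (rot hn d) (isLR_rot hn d)

/-- Objects of the right rotation along a chosen `Σ`-preimage of the last object. -/
@[reducible] def unrotObj (c : NSeq n T S) (X₀ : T) : ℕ → T
  | 0 => X₀
  | (j+1) => c.obj j

lemma unrotObj_last {c : NSeq n T S} {X₀ : T} (hn : 3 ≤ n) :
    unrotObj c X₀ (n-1) = c.obj (n-2) := by
  rw [show n - 1 = (n-2)+1 from by omega]

/-- The right rotation of an `n`-`Σ`-sequence `c` along `h : c.obj (n-1) = S.obj X₀`. -/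
@[reducible] noncomputable def unrot (hn : 3 ≤ n) [S.Full] (c : NSeq n T S) (X₀ : T)
    (h : c.obj (n-1) = S.obj X₀) : NSeq n T S where
  obj := unrotObj c X₀
  mor i := match i with
    | 0 => S.preimage (((-1:ℤ)^n) • (eqToHom h.symm ≫ c.phantom))
    | (j+1) => c.mor j
  phantom := eqToHom (unrotObj_last hn) ≫ c.mor (n-2) ≫
    eqToHom (show c.obj (n-2+1) = S.obj X₀ from by
      rw [show n-2+1 = n-1 from by omega]; exact h)

lemma isLR_unrot (hn : 3 ≤ n) [S.Full] (c : NSeq n T S) (X₀ : T)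
    (h : c.obj (n-1) = S.obj X₀) : IsLeftRotation (unrot hn c X₀ h) c := by
  refine ⟨hn, fun i hi => rfl, h, ?_, ?_, ?_⟩
  · intro i h3
    show c.mor i = _
    simp only [unrot]
    simp
  · show c.mor (n-2) = _
    simp only [unrot]
    simp [eqToHom_trans]
  · show c.phantom = _
    simp only [unrot]
    rw [S.map_preimage]
    simp [Preadditive.comp_zsmul, Preadditive.zsmul_comp, eps_smul_eps]

lemma unrot_mem {Ang : Set (NSeq n T S)} (hAng : IsNAngulated Ang) (hn : 3 ≤ n)
    [S.Full] (c : NSeq n T S) (X₀ : T) (h : c.obj (n-1) = S.obj X₀) :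
    unrot hn c X₀ h ∈ Ang ↔ c ∈ Ang :=
  hAng.rotate _ c (isLR_unrot hn c X₀ h)

end Basic

section Extend

variable {T : Type u'} [Category.{v'} T] [Preadditive T] [HasZeroObject T]
  [HasBinaryBiproducts T] {S : T ⥤ T} {n : ℕ} {Ang : Set (NSeq n T S)}

lemma eps_cancel {X Y : T} {f g : X ⟶ Y} (h : ((-1:ℤ)^n) • f = ((-1:ℤ)^n) • g) :
    f = g := by
  have := congrArg (fun x => ((-1:ℤ)^n) • x) h
  simpa only [eps_smul_eps] using this

lemma descend (hn : 3 ≤ n) [S.Full] [S.Faithful] {d e : NSeq n T S}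
    (appR : ∀ i, i < n → ((rot hn d).obj i ⟶ (rot hn e).obj i))
    (sq : ∀ i, ∀ _ : i + 2 ≤ n, appR i (by omega) ≫ (rot hn e).mor i
        = (rot hn d).mor i ≫ appR (i+1) (by omega))
    (psq : appR (n-1) (by omega) ≫ (rot hn e).phantom
        = (rot hn d).phantom ≫ S.map (appR 0 (by omega))) :
    ∃ app : ∀ i, i < n → (d.obj i ⟶ e.obj i),
      (∀ i, ∀ _ : i + 2 ≤ n, app (i+1) (by omega) =
          eqToHom (rotObj_lt (by omega)).symm ≫ appR i (by omega)
            ≫ eqToHom (rotObj_lt (by omega))) ∧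
      (S.map (app 0 (by omega)) =
          eqToHom (rotObj_last hn).symm ≫ appR (n-1) (by omega)
            ≫ eqToHom (rotObj_last hn)) ∧
      (∀ i, ∀ _ : i + 2 ≤ n, app i (by omega) ≫ e.mor i = d.mor i ≫ app (i+1) (by omega)) ∧
      (app (n-1) (by omega) ≫ e.phantom = d.phantom ≫ S.map (app 0 (by omega))) := by
  obtain ⟨m, rfl⟩ : ∃ m, n = m + 3 := ⟨n - 3, by omega⟩
  have psq' : appR (m+2) (by omega) ≫ (rot hn e).phantom
      = (rot hn d).phantom ≫ S.map (appR 0 (by omega)) := psq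
  refine ⟨fun i hi => match i, hi with
    | 0, _ => S.preimage (eqToHom (rotObj_last hn).symm ≫ appR (m+2) (by omega)
        ≫ eqToHom (rotObj_last hn))
    | (j+1), hj => eqToHom (rotObj_lt (by omega)).symm ≫ appR j (by omega)
        ≫ eqToHom (rotObj_lt (by omega)), ?_, ?_, ?_, ?_⟩
  · intro i h; rfl
  · exact S.map_preimage _
  · intro i h2
    rcases i with _ | j
    · have key0 : S.preimage (eqToHom (rotObj_last (d := d) hn).symm ≫ appR (m+2) (by omega)
          ≫ eqToHom (rotObj_last (d := e) hn)) ≫ e.mor 0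
          = d.mor 0 ≫ (eqToHom (rotObj_lt (d := d) (i := 0) (by omega)).symm ≫ appR 0 (by omega)
            ≫ eqToHom (rotObj_lt (d := e) (i := 0) (by omega))) := by
        apply S.map_injective
        simp only [S.map_comp, S.map_preimage, eqToHom_map]
        rw [(isLR_rot hn d).phantom_eq, (isLR_rot hn e).phantom_eq] at psq'
        simp only [Category.assoc, Preadditive.comp_zsmul, Preadditive.zsmul_comp] at psq'
        have key := eps_cancel psq'
        have key2 := congrArg (fun x =>
          x ≫ eqToHom (congrArg S.obj (rotObj_lt (d := e) (i := 0) (by omega)))) key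
        simp only [Category.assoc, eqToHom_trans, eqToHom_refl, Category.comp_id] at key2
        simp only [Category.assoc]
        rw [key2]
        simp [eqToHom_trans]
      exact key0
    · have hs := sq j (by omega)
      rw [(isLR_rot hn d).mor_eq j (by omega), (isLR_rot hn e).mor_eq j (by omega)] at hs
      have key : (eqToHom (rotObj_lt (d := d) (i := j) (by omega)).symm ≫ appR j (by omega)
            ≫ eqToHom (rotObj_lt (d := e) (i := j) (by omega))) ≫ e.mor (j+1)
          = d.mor (j+1) ≫ (eqToHom (rotObj_lt (d := d) (i := j+1) (by omega)).symm ≫ appR (j+1) (by omega)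
            ≫ eqToHom (rotObj_lt (d := e) (i := j+1) (by omega))) := by
        have hs2 := congrArg (fun x =>
          x ≫ eqToHom (rotObj_lt (d := e) (i := j+1) (by omega))) hs
        simp only [Category.assoc, eqToHom_trans, eqToHom_refl, Category.comp_id] at hs2
        simp only [Category.assoc]
        rw [hs2]
        simp [eqToHom_trans]
      exact key
  · have hs := sq (m+1) (by omega)
    have hmld : (rot hn d).mor (m+1) =
        eqToHom (show (rot hn d).obj (m+1) = d.obj (m+2) from rotObj_lt (by omega))
          ≫ d.phantom ≫ eqToHom (show S.obj (d.obj 0) = (rot hn d).obj (m+2)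
            from (rotObj_last hn).symm) := (isLR_rot hn d).mor_last
    have hmle : (rot hn e).mor (m+1) =
        eqToHom (show (rot hn e).obj (m+1) = e.obj (m+2) from rotObj_lt (by omega))
          ≫ e.phantom ≫ eqToHom (show S.obj (e.obj 0) = (rot hn e).obj (m+2)
            from (rotObj_last hn).symm) := (isLR_rot hn e).mor_last
    rw [hmld, hmle] at hs
    have key : (eqToHom (rotObj_lt (d := d) (i := m+1) (by omega)).symm ≫ appR (m+1) (by omega)
          ≫ eqToHom (rotObj_lt (d := e) (i := m+1) (by omega))) ≫ e.phantom
        = d.phantom ≫ S.map (S.preimage (eqToHom (rotObj_last (d := d) hn).symm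
            ≫ appR (m+2) (by omega) ≫ eqToHom (rotObj_last (d := e) hn))) := by
      rw [S.map_preimage]
      have hs2 := congrArg (fun x =>
        x ≫ eqToHom (show (rot hn e).obj (m+2) = S.obj (e.obj 0)
          from rotObj_last hn)) hs
      simp only [Category.assoc, eqToHom_trans, eqToHom_refl, Category.comp_id] at hs2
      simp only [Category.assoc]
      rw [hs2]
      simp [eqToHom_trans]
    exact key

end Extend
section Extend2

variable {T : Type u'} [Category.{v'} T] [Preadditive T] [HasZeroObject T]
  [HasBinaryBiproducts T] {S : T ⥤ T} {n : ℕ} {Ang : Set (NSeq n T S)}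

lemma extend_square (hAng : IsNAngulated Ang) (hn : 3 ≤ n) [S.Full] [S.Faithful] :
    ∀ (j : ℕ) (hj : j + 2 ≤ n), ∀ (d e : NSeq n T S), d ∈ Ang → e ∈ Ang →
    ∀ (gj : d.obj j ⟶ e.obj j) (gj1 : d.obj (j+1) ⟶ e.obj (j+1)),
      gj ≫ e.mor j = d.mor j ≫ gj1 →
    ∃ app : ∀ i, i < n → (d.obj i ⟶ e.obj i),
      app j (by omega) = gj ∧ app (j+1) (by omega) = gj1 ∧
      (∀ i, ∀ _ : i + 2 ≤ n, app i (by omega) ≫ e.mor i = d.mor i ≫ app (i+1) (by omega)) ∧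
      (app (n-1) (by omega) ≫ e.phantom = d.phantom ≫ S.map (app 0 (by omega))) := by
  intro j
  induction j with
  | zero =>
    intro h2 d e hd he g0 g1 hsq
    obtain ⟨Φ, h0, h1, -⟩ := hAng.fill d e hd he g0 g1 hsq
    exact ⟨fun i _ => Φ.app i, h0, h1, fun i h => Φ.comm i h, Φ.comm_phantom⟩
  | succ j ih =>
    intro hj2 d e hd he gJ gJ1 hsq
    have hrd : rot hn d ∈ Ang := (rot_mem hAng hn d).mp hd
    have hre : rot hn e ∈ Ang := (rot_mem hAng hn e).mp he
    set gj' : (rot hn d).obj j ⟶ (rot hn e).obj j :=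
      eqToHom (rotObj_lt (d := d) (i := j) (by omega)) ≫ gJ ≫
        eqToHom (rotObj_lt (d := e) (i := j) (by omega)).symm with hgj'
    set gj1' : (rot hn d).obj (j+1) ⟶ (rot hn e).obj (j+1) :=
      eqToHom (rotObj_lt (d := d) (i := j+1) (by omega)) ≫ gJ1 ≫
        eqToHom (rotObj_lt (d := e) (i := j+1) (by omega)).symm with hgj1'
    have hsq' : gj' ≫ (rot hn e).mor j = (rot hn d).mor j ≫ gj1' := by
      rw [(isLR_rot hn d).mor_eq j (by omega), (isLR_rot hn e).mor_eq j (by omega),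
        hgj', hgj1']
      simp only [Category.assoc, eqToHom_trans, eqToHom_trans_assoc, eqToHom_refl,
        Category.comp_id, Category.id_comp, reassoc_of% hsq]
    obtain ⟨appR, hRj, hRj1, hRsq, hRpsq⟩ :=
      ih (by omega) (rot hn d) (rot hn e) hrd hre gj' gj1' hsq'
    obtain ⟨app, ha, hb, hc, hd'⟩ := descend hn appR hRsq hRpsq
    refine ⟨app, ?_, ?_, hc, hd'⟩
    · rw [ha j (by omega), hRj, hgj']
      simp [eqToHom_trans]
    · rw [ha (j+1) (by omega), hRj1, hgj1']
      simp [eqToHom_trans]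

lemma extend_phantom_square (hAng : IsNAngulated Ang) (hn : 3 ≤ n) [S.Full] [S.Faithful]
    {d e : NSeq n T S} (hd : d ∈ Ang) (he : e ∈ Ang)
    (u : d.obj (n-1) ⟶ e.obj (n-1)) (v : d.obj 0 ⟶ e.obj 0)
    (hsq : u ≫ e.phantom = d.phantom ≫ S.map v) :
    ∃ app : ∀ i, i < n → (d.obj i ⟶ e.obj i),
      app (n-1) (by omega) = u ∧ app 0 (by omega) = v ∧
      (∀ i, ∀ _ : i + 2 ≤ n, app i (by omega) ≫ e.mor i = d.mor i ≫ app (i+1) (by omega)) ∧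
      (app (n-1) (by omega) ≫ e.phantom = d.phantom ≫ S.map (app 0 (by omega))) := by
  obtain ⟨m, rfl⟩ : ∃ m, n = m + 3 := ⟨n - 3, by omega⟩
  have hrd : rot hn d ∈ Ang := (rot_mem hAng hn d).mp hd
  have hre : rot hn e ∈ Ang := (rot_mem hAng hn e).mp he
  set gj : (rot hn d).obj (m+1) ⟶ (rot hn e).obj (m+1) :=
    eqToHom (rotObj_lt (d := d) (i := m+1) (by omega)) ≫ u ≫
      eqToHom (rotObj_lt (d := e) (i := m+1) (by omega)).symm with hgj
  set gj1 : (rot hn d).obj (m+2) ⟶ (rot hn e).obj (m+2) :=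
    eqToHom (rotObj_last (d := d) hn) ≫ S.map v ≫
      eqToHom (rotObj_last (d := e) hn).symm with hgj1
  have hmld : (rot hn d).mor (m+1) =
      eqToHom (show (rot hn d).obj (m+1) = d.obj (m+2) from rotObj_lt (by omega))
        ≫ d.phantom ≫ eqToHom (show S.obj (d.obj 0) = (rot hn d).obj (m+2)
          from (rotObj_last hn).symm) := (isLR_rot hn d).mor_last
  have hmle : (rot hn e).mor (m+1) =
      eqToHom (show (rot hn e).obj (m+1) = e.obj (m+2) from rotObj_lt (by omega))
        ≫ e.phantom ≫ eqToHom (show S.obj (e.obj 0) = (rot hn e).obj (m+2)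
          from (rotObj_last hn).symm) := (isLR_rot hn e).mor_last
  have hsq' : gj ≫ (rot hn e).mor (m+1) = (rot hn d).mor (m+1) ≫ gj1 := by
    rw [hmld, hmle, hgj, hgj1]
    simp only [Category.assoc, eqToHom_trans, eqToHom_trans_assoc, eqToHom_refl,
      Category.comp_id, Category.id_comp, reassoc_of% hsq]
  obtain ⟨appR, hRj, hRj1, hRsq, hRpsq⟩ :=
    extend_square hAng hn (m+1) (by omega) (rot hn d) (rot hn e) hrd hre gj gj1 hsq'
  obtain ⟨app, ha, hb, hc, hd'⟩ := descend hn appR hRsq hRpsq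
  have happ : app (m+2) (by omega) = u := by
    rw [ha (m+1) (by omega), hRj, hgj]
    simp [eqToHom_trans]
  have happ0 : app 0 (by omega) = v := by
    apply S.map_injective
    have hRj1' : appR (m+3-1) (by omega) = gj1 := hRj1
    rw [hb, hRj1', hgj1]
    simp [eqToHom_trans]
  exact ⟨app, happ, happ0, hc, hd'⟩

/-- Upgrade a family of components to a total `NSeqHom`. -/
lemma toNSeqHom {d e : NSeq n T S} (hn : 3 ≤ n)
    (app : ∀ i, i < n → (d.obj i ⟶ e.obj i))
    (sq : ∀ i, ∀ _ : i + 2 ≤ n, app i (by omega) ≫ e.mor i = d.mor i ≫ app (i+1) (by omega))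
    (psq : app (n-1) (by omega) ≫ e.phantom = d.phantom ≫ S.map (app 0 (by omega))) :
    ∃ Φ : NSeqHom d e, ∀ i (h : i < n), Φ.app i = app i h := by
  refine ⟨⟨fun i => if h : i < n then app i h else 0, ?_, ?_⟩, fun i h => dif_pos h⟩
  · intro i h
    simp only [dif_pos (show i < n from by omega), dif_pos (show i + 1 < n from by omega)]
    exact sq i h
  · simp only [dif_pos (show n - 1 < n from by omega), dif_pos (show 0 < n from by omega)]
    exact psq

end Extend2
section Realize

variable {T : Type u'} [Category.{v'} T] [Preadditive T] [HasZeroObject T]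
  [HasBinaryBiproducts T] {S : T ⥤ T} {n : ℕ} {Ang : Set (NSeq n T S)}

@[reducible] private noncomputable def wFun [S.EssSurj] (M₀ : NSeq n T S) (X₀ B₀ : T) : ℕ → T
  | 0 => X₀
  | 1 => B₀
  | (j+2) => S.objPreimage (M₀.obj (j+2))

@[reducible] private noncomputable def gFun [S.EssSurj] (M₀ : NSeq n T S) (X₀ B₀ : T) : ℕ → T
  | 0 => X₀
  | 1 => S.obj B₀
  | (j+2) => S.obj (S.objPreimage (M₀.obj (j+2)))

private lemma gFun_eq [S.EssSurj] (M₀ : NSeq n T S) (X₀ B₀ : T) (j : ℕ) (hj : 1 ≤ j) :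
    gFun M₀ X₀ B₀ j = S.obj (wFun M₀ X₀ B₀ j) := by
  match j, hj with
  | 1, _ => rfl
  | (j+2), _ => rfl

private noncomputable def σFun [S.EssSurj] (M₀ : NSeq n T S) (X₀ B₀ : T)
    (e0 : M₀.obj 0 = X₀) (e1 : M₀.obj 1 = S.obj B₀) :
    ∀ i, gFun M₀ X₀ B₀ i ≅ M₀.obj i
  | 0 => eqToIso e0.symm
  | 1 => eqToIso e1.symm
  | (j+2) => S.objObjPreimageIso (M₀.obj (j+2))

/-- Every morphism `X₀ ⟶ S.obj B₀` is the phantom of some `n`-angle with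
prescribed end objects. -/
lemma realize_phantom (hAng : IsNAngulated Ang) (hn : 3 ≤ n)
    [S.Full] [S.Faithful] [S.EssSurj] (X₀ B₀ : T) (m₀ : X₀ ⟶ S.obj B₀) :
    ∃ H, H ∈ Ang ∧ ∃ (h1 : H.obj (n-1) = X₀) (h0 : H.obj 0 = B₀),
      H.phantom = eqToHom h1 ≫ m₀ ≫ eqToHom (congrArg S.obj h0.symm) := by
  obtain ⟨m, rfl⟩ : ∃ m, n = m + 3 := ⟨n - 3, by omega⟩
  obtain ⟨M₀, hM₀, e0, e1, hM₀mor⟩ := hAng.complete m₀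
  set w := wFun M₀ X₀ B₀ with hwdef
  set g := gFun M₀ X₀ B₀ with hgdef
  set M := reshape M₀ g (σFun M₀ X₀ B₀ e0 e1) with hMdef
  have hM : M ∈ Ang := reshape_mem hAng hM₀ _ _
  have hMobj : ∀ i, M.obj i = g i := fun i => rfl
  have hMobjw : ∀ i, 1 ≤ i → M.obj i = S.obj (w i) := fun i hi => gFun_eq M₀ X₀ B₀ i hi
  have hMmor0 : M.mor 0 = m₀ := by
    show (reshape M₀ g (σFun M₀ X₀ B₀ e0 e1)).mor 0 = m₀
    rw [reshape_mor, hM₀mor]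
    simp [σFun]
  -- iterated unrotation
  have main : ∀ k, 1 ≤ k → k ≤ m + 2 → ∃ c, c ∈ Ang ∧
      (∀ i, i < m + 3 →
        c.obj i = (if i < k then w (i + (m+3) - k) else if i = k then X₀ else S.obj (w (i - k)))) ∧
      (∀ j, k ≤ j → j + 2 ≤ m + 3 →
        ∃ (E1 : c.obj j = M.obj (j - k)) (E2 : M.obj (j - k + 1) = c.obj (j+1)),
          c.mor j = eqToHom E1 ≫ M.mor (j - k) ≫ eqToHom E2) ∧
      (∃ (E1 : c.obj (m+2) = M.obj (m+2-k)) (E2 : M.obj (m+2-k+1) = S.obj (c.obj 0)),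
          c.phantom = eqToHom E1 ≫ M.mor (m+2-k) ≫ eqToHom E2) := by
    intro k
    induction k with
    | zero => omega
    | succ k ih =>
      intro _ hk2
      rcases Nat.eq_or_lt_of_le (show 1 ≤ k + 1 from by omega) with hk1 | hk1
      · -- base case k + 1 = 1, i.e. k = 0
        obtain rfl : k = 0 := by omega
        have hlast : M.obj (m+2) = S.obj (w (m+2)) := rfl
        refine ⟨unrot hn M (w (m+2)) hlast, (unrot_mem hAng hn M _ hlast).mpr hM, ?_, ?_, ?_⟩
        · intro i hi
          match i with
          | 0 =>
            rw [if_pos (by omega)]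
            show w (m+2) = _
            congr 1
            omega
          | 1 =>
            rw [if_neg (by omega), if_pos rfl]
          | 2 =>
            rw [if_neg (by omega), if_neg (by omega)]
            rfl
          | (j+3) =>
            rw [if_neg (by omega), if_neg (by omega)]
            rfl
        · intro j hj hj2
          obtain ⟨j', rfl⟩ : ∃ j', j = j' + 1 := ⟨j - 1, by omega⟩
          exact ⟨rfl, rfl, by simp [unrot]⟩
        · refine ⟨rfl, rfl, ?_⟩
          show eqToHom _ ≫ M.mor (m+1) ≫ eqToHom _ = _
          simp [eqToHom_trans]
      · -- inductive step: k ≥ 1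
        obtain ⟨c, hc, hobj, hmor, hph⟩ := ih (by omega) (by omega)
        have hlast : c.obj (m+2) = S.obj (w (m+2-k)) := by
          rw [hobj (m+2) (by omega), if_neg (by omega), if_neg (by omega)]
        refine ⟨unrot hn c (w (m+2-k)) hlast,
          (unrot_mem hAng hn c _ hlast).mpr hc, ?_, ?_, ?_⟩
        · intro i hi
          match i with
          | 0 =>
            rw [if_pos (by omega)]
            show w (m+2-k) = _
            congr 1
            omega
          | (j+1) =>
            have hcj := hobj j (by omega)
            show c.obj j = _
            rw [hcj]
            by_cases h1 : j < k
            · rw [if_pos h1, if_pos (by omega)]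
              congr 1
              omega
            · by_cases h2 : j = k
              · rw [if_neg h1, if_pos h2, if_neg (by omega), if_pos (by omega)]
              · rw [if_neg h1, if_neg h2, if_neg (by omega), if_neg (by omega)]
                congr 2
                omega
        · intro j hj hj2
          obtain ⟨j', rfl⟩ : ∃ j', j = j' + 1 := ⟨j - 1, by omega⟩
          obtain ⟨E1, E2, heq⟩ := hmor j' (by omega) (by omega)
          rw [show j' + 1 - (k+1) = j' - k from by omega]
          exact ⟨E1, E2, heq⟩
        · obtain ⟨E1, E2, heq⟩ := hmor (m+1) (by omega) (by omega)
          rw [show m + 2 - (k+1) = m+1-k from by omega]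
          have hc2 : c.obj (m+1+1) = S.obj (w (m+2-k)) := hlast
          refine ⟨E1, E2.trans hc2, ?_⟩
          show eqToHom _ ≫ c.mor (m+1) ≫ eqToHom _ = _
          rw [heq]
          simp [eqToHom_trans]
  obtain ⟨H, hH, hobj, hmor, hph⟩ := main (m+2) (by omega) (by omega)
  have h1 : H.obj (m+2) = X₀ := by
    rw [hobj (m+2) (by omega), if_neg (by omega), if_pos rfl]
  have h0 : H.obj 0 = B₀ := by
    rw [hobj 0 (by omega), if_pos (by omega), show 0 + (m+3) - (m+2) = 1 from by omega]
  obtain ⟨E1, E2, heq⟩ := hph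
  rw [mor_congr M (show 0 = m + 2 - (m+2) from by omega), hMmor0] at heq
  refine ⟨H, hH, h1, h0, ?_⟩
  rw [heq]
  simp [eqToHom_trans]
end Realize
section Changes

variable {T : Type u'} [Category.{v'} T] [Preadditive T] [HasZeroObject T]
  [HasBinaryBiproducts T] {S : T ⥤ T} {n : ℕ} {Ang : Set (NSeq n T S)}

/-- Cobase change: given an `n`-angle `f` and `t : f.obj 0 ⟶ B`, there is an
`n`-angle `H` with ends `B`, `f.obj (n-1)`, phantom `f.phantom ≫ S.map t`, and a
morphism `f ⟶ H` which is the identity in the last component. -/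
lemma cobase_realize (hAng : IsNAngulated Ang) (hn : 3 ≤ n)
    [S.Full] [S.Faithful] [S.EssSurj] {f : NSeq n T S} (hf : f ∈ Ang)
    {B : T} (t : f.obj 0 ⟶ B) :
    ∃ H, H ∈ Ang ∧ ∃ (h0 : H.obj 0 = B) (h1 : H.obj (n-1) = f.obj (n-1)),
      H.phantom = eqToHom h1 ≫ f.phantom ≫ S.map t ≫ eqToHom (congrArg S.obj h0.symm) ∧
      ∃ Θ : NSeqHom f H, Θ.app (n-1) = eqToHom h1.symm := by
  obtain ⟨H, hH, h1, h0, hph⟩ := realize_phantom hAng hn (f.obj (n-1)) B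
    (f.phantom ≫ S.map t)
  refine ⟨H, hH, h0, h1, by rw [hph]; simp, ?_⟩
  have hsq : eqToHom h1.symm ≫ H.phantom = f.phantom ≫ S.map (t ≫ eqToHom h0.symm) := by
    rw [hph]
    simp [eqToHom_trans, eqToHom_map]
  obtain ⟨app, ha1, ha0, hsqs, hpsq⟩ := extend_phantom_square hAng hn hf hH
    (eqToHom h1.symm) (t ≫ eqToHom h0.symm) hsq
  obtain ⟨Θ, hΘ⟩ := toNSeqHom hn app hsqs hpsq
  exact ⟨Θ, by rw [hΘ (n-1) (by omega), ha1]⟩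

/-- Base change: given an `n`-angle `f` and `s : P ⟶ f.obj (n-1)`, there is an
`n`-angle `G` with ends `f.obj 0`, `P`, phantom `s ≫ f.phantom`, and a morphism
`G ⟶ f` which is the identity in the `0`-th component. -/
lemma base_realize (hAng : IsNAngulated Ang) (hn : 3 ≤ n)
    [S.Full] [S.Faithful] [S.EssSurj] {f : NSeq n T S} (hf : f ∈ Ang)
    {P : T} (s : P ⟶ f.obj (n-1)) :
    ∃ G, G ∈ Ang ∧ ∃ (hP : G.obj (n-1) = P) (h0 : G.obj 0 = f.obj 0),
      G.phantom = eqToHom hP ≫ s ≫ f.phantom ≫ eqToHom (congrArg S.obj h0.symm) ∧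
      ∃ Θ : NSeqHom G f, Θ.app 0 = eqToHom h0 := by
  obtain ⟨G, hG, h1, h0, hph⟩ := realize_phantom hAng hn P (f.obj 0) (s ≫ f.phantom)
  refine ⟨G, hG, h1, h0, by rw [hph]; simp, ?_⟩
  have hsq : (eqToHom h1 ≫ s) ≫ f.phantom = G.phantom ≫ S.map (eqToHom h0) := by
    rw [hph]
    simp [eqToHom_trans, eqToHom_map]
  obtain ⟨app, ha1, ha0, hsqs, hpsq⟩ := extend_phantom_square hAng hn hG hf
    (eqToHom h1 ≫ s) (eqToHom h0) hsq
  obtain ⟨Θ, hΘ⟩ := toNSeqHom hn app hsqs hpsq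
  exact ⟨Θ, by rw [hΘ 0 (by omega), ha0]⟩

lemma Smap_zero [S.Full] (X Y : T) : S.map (0 : X ⟶ Y) = 0 := by
  have h1 : (0 : X ⟶ Y) = (0 : X ⟶ (0:T)) ≫ (0 : (0:T) ⟶ Y) := by simp
  obtain ⟨wz, hwz⟩ := S.map_surjective (0 : S.obj (0:T) ⟶ S.obj Y)
  have h2 : (0 : (0:T) ⟶ Y) = wz := (isZero_zero T).eq_of_src _ _
  rw [h1, S.map_comp, h2, hwz, comp_zero]

/-- The projection from a reshaped biproduct sequence to its first factor. -/
lemma projHom [S.Full] (d J : NSeq n T S) (g : ℕ → T)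
    (σ : ∀ i, g i ≅ (biprodSeq d J).obj i) :
    ∃ π : NSeqHom (reshape (biprodSeq d J) g σ) d,
      ∀ i, π.app i = (σ i).hom ≫ biprod.fst := by
  refine ⟨⟨fun i => (σ i).hom ≫ biprod.fst, ?_, ?_⟩, fun i => rfl⟩
  · intro i h
    rw [reshape_mor]
    simp [biprodSeq]
  · rw [reshape_phantom]
    have hkey : (biprodSeq d J).phantom
        ≫ S.map (biprod.fst : d.obj 0 ⊞ J.obj 0 ⟶ d.obj 0) = biprod.fst ≫ d.phantom := by
      apply biprod.hom_ext'
      · simp [biprodSeq, ← S.map_comp]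
      · simp [biprodSeq, ← S.map_comp, Smap_zero]
    calc ((σ (n-1)).hom ≫ biprod.fst) ≫ d.phantom
        = (σ (n-1)).hom ≫ (biprodSeq d J).phantom ≫ S.map biprod.fst := by
          rw [hkey, Category.assoc]
      _ = ((σ (n-1)).hom ≫ (biprodSeq d J).phantom ≫ S.map (σ 0).inv)
            ≫ S.map ((σ 0).hom ≫ biprod.fst) := by
          rw [S.map_comp]
          slice_rhs 3 4 => rw [← S.map_comp, Iso.inv_hom_id, S.map_id]
          simp

end Changes
section Reshape3

variable {T : Type u'} [Category.{v'} T] [Preadditive T] [HasZeroObject T]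
  [HasBinaryBiproducts T] {S : T ⥤ T} {n : ℕ} {Ang : Set (NSeq n T S)}

lemma happ_congr {d e : NSeq n T S} (Φ : NSeqHom d e) {i j : ℕ} (h : i = j) :
    Φ.app j = eqToHom (congrArg d.obj h.symm) ≫ Φ.app i ≫ eqToHom (congrArg e.obj h) := by
  subst h; simp

lemma fam_congr {d e : NSeq n T S} (app : ∀ i, i < n → (d.obj i ⟶ e.obj i)) {i j : ℕ}
    (h : i = j) (hi : i < n) (hj : j < n) :
    app j hj = eqToHom (congrArg d.obj h.symm) ≫ app i hi ≫ eqToHom (congrArg e.obj h) := by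
  subst h; simp

lemma trivialNSeq_obj_ge2 (A : T) (i : ℕ) (h : 2 ≤ i) :
    (trivialNSeq (S := S) (n := n) A).obj i = (0:T) := by
  match i, h with
  | (j+2), _ => rfl

/-- `X ≅ X ⊞ Z` for a zero object `Z`. -/
noncomputable def addZeroIso (X Z₀ : T) (h : IsZero Z₀) : X ≅ X ⊞ Z₀ where
  hom := biprod.lift (𝟙 X) 0
  inv := biprod.fst
  hom_inv_id := by simp
  inv_hom_id := by
    apply biprod.hom_ext
    · simp
    · apply h.eq_of_tgt

/-- `X ≅ Z ⊞ X` for a zero object `Z`. -/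
noncomputable def zeroAddIso (X Z₀ : T) (h : IsZero Z₀) : X ≅ Z₀ ⊞ X where
  hom := biprod.lift 0 (𝟙 X)
  inv := biprod.snd
  hom_inv_id := by simp
  inv_hom_id := by
    apply biprod.hom_ext
    · apply h.eq_of_tgt
    · simp

/-- The objects used in `reshape3`. -/
@[reducible] def g3 (a : NSeq n T S) (Z₀ Zs Zl : T) : ℕ → T := fun i =>
  if i = 0 then Z₀ else if i = n-2 then Zs else if i = n-1 then Zl else a.obj i

private noncomputable def σ3 (hn : 3 ≤ n) (a : NSeq n T S) (Z₀ Zs Zl : T)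
    (ι₀ : Z₀ ≅ a.obj 0) (ιs : Zs ≅ a.obj (n-2)) (ιl : Zl ≅ a.obj (n-1)) :
    ∀ i, g3 a Z₀ Zs Zl i ≅ a.obj i := fun i =>
  if h0 : i = 0 then
    eqToIso (show g3 a Z₀ Zs Zl i = Z₀ from by rw [h0]; rfl) ≪≫ ι₀ ≪≫
      eqToIso (congrArg a.obj h0.symm)
  else if hs : i = n-2 then
    eqToIso (show g3 a Z₀ Zs Zl i = Zs from by rw [g3, if_neg h0, if_pos hs]) ≪≫ ιs ≪≫
      eqToIso (congrArg a.obj hs.symm)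
  else if hl : i = n-1 then
    eqToIso (show g3 a Z₀ Zs Zl i = Zl from by
      rw [g3, if_neg h0, if_neg hs, if_pos hl]) ≪≫ ιl ≪≫
      eqToIso (congrArg a.obj hl.symm)
  else eqToIso (show g3 a Z₀ Zs Zl i = a.obj i from by
      rw [g3, if_neg h0, if_neg hs, if_neg hl])

/-- Replace the objects in slots `0`, `n-2`, `n-1` of an `n`-`Σ`-sequence by
isomorphic ones. -/
@[reducible] noncomputable def reshape3 (hn : 3 ≤ n) (a : NSeq n T S) (Z₀ Zs Zl : T)
    (ι₀ : Z₀ ≅ a.obj 0) (ιs : Zs ≅ a.obj (n-2)) (ιl : Zl ≅ a.obj (n-1)) : NSeq n T S :=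
  reshape a (g3 a Z₀ Zs Zl) (σ3 hn a Z₀ Zs Zl ι₀ ιs ιl)

variable (hn : 3 ≤ n) (a : NSeq n T S) (Z₀ Zs Zl : T)
  (ι₀ : Z₀ ≅ a.obj 0) (ιs : Zs ≅ a.obj (n-2)) (ιl : Zl ≅ a.obj (n-1))

lemma reshape3_obj0 : (reshape3 hn a Z₀ Zs Zl ι₀ ιs ιl).obj 0 = Z₀ := rfl

lemma reshape3_objs : (reshape3 hn a Z₀ Zs Zl ι₀ ιs ιl).obj (n-2) = Zs := by
  show g3 a Z₀ Zs Zl (n-2) = Zs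
  rw [g3, if_neg (by omega), if_pos rfl]

lemma reshape3_objl : (reshape3 hn a Z₀ Zs Zl ι₀ ιs ιl).obj (n-1) = Zl := by
  show g3 a Z₀ Zs Zl (n-1) = Zl
  rw [g3, if_neg (by omega), if_neg (by omega), if_pos rfl]

lemma reshape3_obj_other (i : ℕ) (h0 : i ≠ 0) (hs : i ≠ n-2) (hl : i ≠ n-1) :
    (reshape3 hn a Z₀ Zs Zl ι₀ ιs ιl).obj i = a.obj i := by
  show g3 a Z₀ Zs Zl i = a.obj i
  rw [g3, if_neg h0, if_neg hs, if_neg hl]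

lemma reshape3_mem (hAng : IsNAngulated Ang) (ha : a ∈ Ang) :
    reshape3 hn a Z₀ Zs Zl ι₀ ιs ιl ∈ Ang := reshape_mem hAng ha _ _

lemma σ3_hom_0 : (σ3 hn a Z₀ Zs Zl ι₀ ιs ιl 0).hom =
    eqToHom (show g3 a Z₀ Zs Zl 0 = Z₀ from rfl) ≫ ι₀.hom ≫
      eqToHom (congrArg a.obj (rfl : (0:ℕ) = 0).symm) := by
  rw [σ3, dif_pos rfl]
  simp

lemma σ3_hom_last : (σ3 hn a Z₀ Zs Zl ι₀ ιs ιl (n-1)).hom =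
    eqToHom (show g3 a Z₀ Zs Zl (n-1) = Zl from by
      rw [g3, if_neg (by omega), if_neg (by omega), if_pos rfl]) ≫ ιl.hom := by
  rw [σ3, dif_neg (by omega : ¬ (n-1 = 0)), dif_neg (by omega : ¬ (n-1 = n-2)),
    dif_pos rfl]
  simp

lemma σ3_inv_0 : (σ3 hn a Z₀ Zs Zl ι₀ ιs ιl 0).inv =
    ι₀.inv ≫ eqToHom (show Z₀ = g3 a Z₀ Zs Zl 0 from rfl) := by
  rw [σ3, dif_pos rfl]
  simp

lemma σ3_inv_last : (σ3 hn a Z₀ Zs Zl ι₀ ιs ιl (n-1)).inv =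
    ιl.inv ≫ eqToHom (show Zl = g3 a Z₀ Zs Zl (n-1) from by
      rw [g3, if_neg (by omega), if_neg (by omega), if_pos rfl]) := by
  rw [σ3, dif_neg (by omega : ¬ (n-1 = 0)), dif_neg (by omega : ¬ (n-1 = n-2)),
    dif_pos rfl]
  simp

lemma reshape3_phantom :
    (reshape3 hn a Z₀ Zs Zl ι₀ ιs ιl).phantom =
      eqToHom (reshape3_objl hn a Z₀ Zs Zl ι₀ ιs ιl) ≫ ιl.hom ≫ a.phantom ≫
        S.map (ι₀.inv) ≫ S.map (eqToHom (reshape3_obj0 hn a Z₀ Zs Zl ι₀ ιs ιl).symm) := by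
  show (reshape a _ _).phantom = _
  rw [reshape_phantom, σ3_hom_last, σ3_inv_0]
  simp [eqToHom_map]

/-- The pair sequence: `(0, …, 0, ΣV, ΣV)` concentrated in slots `n-2`, `n-1`. -/
noncomputable def pairSeq (hn : 3 ≤ n) (V : T) : NSeq n T S :=
  rot hn (rot hn (trivialNSeq V))

lemma pairSeq_mem (hAng : IsNAngulated Ang) (hn : 3 ≤ n) (V : T) :
    pairSeq (S := S) hn V ∈ Ang := by
  rw [pairSeq, ← rot_mem hAng, ← rot_mem hAng]
  exact hAng.trivial_mem V

lemma pairSeq_obj0 (hn : 3 ≤ n) (V : T) : (pairSeq (S := S) hn V).obj 0 = (0:T) := by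
  show rotObj (rot hn (trivialNSeq V)) 0 = _
  rw [rotObj_lt (by omega)]
  show rotObj (trivialNSeq V) 1 = _
  rw [rotObj_lt (by omega)]
  rfl

lemma pairSeq_objs (hn : 3 ≤ n) (V : T) :
    (pairSeq (S := S) hn V).obj (n-2) = S.obj V := by
  show rotObj (rot hn (trivialNSeq V)) (n-2) = _
  rw [rotObj_lt (by omega), show n - 2 + 1 = n - 1 from by omega]
  show rotObj (trivialNSeq V) (n-1) = _
  rw [rotObj_last hn]
  rfl

lemma pairSeq_objl (hn : 3 ≤ n) (V : T) :
    (pairSeq (S := S) hn V).obj (n-1) = S.obj V := by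
  show rotObj (rot hn (trivialNSeq V)) (n-1) = _
  rw [rotObj_last hn]
  show S.obj (rotObj (trivialNSeq V) 0) = _
  rw [rotObj_lt (by omega)]
  rfl

end Reshape3
end IdealApproxAux

/-- `E`-projective `E`-deflations (resp. `E`-injective `E`-inflations) are test maps
for relative phantoms (resp. relative cophantoms). -/
theorem stmt_15 {T : Type u} [Category.{v} T] [Preadditive T] [HasZeroObject T]
    [HasBinaryBiproducts T] (S : T ⥤ T) [S.IsEquivalence] {n : ℕ} (hn : 3 ≤ n)
    (Ang : Set (NSeq n T S)) (hAng : IsNAngulated Ang)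
    (A : Set T) (hA : ClosedUnderExtensions Ang A)
    (E : Set (NSeq n T S)) (hE : IsAlmostNExact Ang A E)
    (F : Set (NSeq n T S)) (hF : IsAlmostNExact Ang A F) (hFE : F ⊆ E) :
    (∀ d ∈ E, EProj A E (d.mor (n - 2)) →
      ∀ ⦃X : T⦄, X ∈ A → ∀ φ : X ⟶ d.obj (n - 1),
        (relPhant A E F φ ↔ phant F (φ ≫ d.phantom))) ∧
    (∀ d ∈ E, EInj A E (d.mor 0) →
      ∀ ⦃Y : T⦄, Y ∈ A → ∀ φ : d.obj 0 ⟶ Y,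
        (relCophant A E F φ ↔ phant F (d.phantom ≫ S.map φ))) := by
  open IdealApproxAux in
  constructor
  · -- Part (1)
    intro d hd hEP X hX φ
    constructor
    · intro hrel
      exact hrel.2.2 d.phantom ⟨d, hd, rfl, rfl, by simp⟩
    · intro hP
      refine ⟨hX, (hE.subset_DA hd).2 (n-1) (by omega), ?_⟩
      intro B h hhE
      obtain ⟨e, heE, hXe, hYe, heq⟩ := hhE
      have hdA : d ∈ Ang := (hE.subset_DA hd).1
      have heA : e ∈ Ang := (hE.subset_DA heE).1
      have hidx : n - 2 + 1 = n - 1 := by omega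
      -- factor the deflation of `d` through the deflation of `e`
      have hdefl : IsDefl E (e.mor (n-2) ≫
          eqToHom (show e.obj (n-2+1) = d.obj (n-2+1) from by rw [hidx]; exact hXe)) :=
        ⟨e, heE, rfl, (show e.obj (n-2+1) = d.obj (n-2+1) from by rw [hidx]; exact hXe),
          by simp⟩
      obtain ⟨gg, hgg⟩ := hEP.2.2 _ hdefl
      have hsq : gg ≫ e.mor (n-2) = d.mor (n-2) ≫
          eqToHom (show d.obj (n-2+1) = e.obj (n-2+1) from by rw [hidx]; exact hXe.symm) := by
        rw [← hgg]
        simp [eqToHom_trans]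
      obtain ⟨app, haj, haj1, hsqs, hpsq⟩ :=
        extend_square hAng hn (n-2) (by omega) d e hdA heA gg _ hsq
      have happ : app (n-1) (by omega) = eqToHom hXe.symm := by
        rw [fam_congr app hidx (by omega) (by omega), haj1]
        simp [eqToHom_trans]
      rw [happ] at hpsq
      set t := app 0 (by omega) with ht
      -- realize the pushout of the F-angle along t
      obtain ⟨f, hfF, hXf, hYf, hfe⟩ := hP
      have hfA : f ∈ Ang := (hF.subset_DA hfF).1
      set t' : f.obj 0 ⟶ e.obj 0 := S.preimage (eqToHom hYf ≫ S.map t) with ht'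
      obtain ⟨H, hHAng, h0, h1, hHph, Θ, hΘ⟩ := cobase_realize hAng hn hfA t'
      have hHDA : H ∈ DA Ang A := by
        refine ⟨hHAng, hA H hHAng ?_ ?_⟩
        · rw [h0]; exact (hE.subset_DA heE).2 0 (by omega)
        · rw [h1]; exact (hF.subset_DA hfF).2 (n-1) (by omega)
      have hHF : H ∈ F := hF.cobase_change f hfF H hHDA Θ h1.symm hΘ
      refine ⟨H, hHF, h1.trans hXf, (congrArg S.obj h0).trans hYe, ?_⟩
      rw [heq]
      have he2 : eqToHom hXe.symm ≫ e.phantom = d.phantom ≫ S.map t := hpsq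
      have hst' : S.map t' = eqToHom hYf ≫ S.map t := S.map_preimage _
      rw [hHph, hst']
      simp only [Category.assoc, reassoc_of% he2, reassoc_of% hfe, eqToHom_trans,
        eqToHom_trans_assoc, eqToHom_refl, Category.id_comp, Category.comp_id]
  · -- Part (2)
    intro d hd hEI Y hY φ
    constructor
    · -- forward
      intro hC
      have hA1 : d.obj 0 ∈ A := (hE.subset_DA hd).2 0 (by omega)
      have hAn : d.obj (n-1) ∈ A := (hE.subset_DA hd).2 (n-1) (by omega)
      have hdA : d ∈ Ang := (hE.subset_DA hd).1
      set Un := S.objPreimage (d.obj (n-1)) with hUndef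
      set σU : S.obj Un ≅ d.obj (n-1) := S.objObjPreimageIso (d.obj (n-1)) with hσUdef
      set T₀ := (trivialNSeq (S := S) (n := n) (d.obj 0)).obj (n-2) with hT₀def
      set W₀ := S.objPreimage (T₀ ⊞ S.obj Un) with hW₀def
      set Z := S.obj W₀ with hZdef
      set ζ : Z ≅ T₀ ⊞ S.obj Un := S.objObjPreimageIso _ with hζdef
      -- Step 1 : Z ∈ A, via the angle K'
      have hZA : Z ∈ A := by
        set K := biprodSeq (trivialNSeq (d.obj 0)) (pairSeq (S := S) hn Un) with hKdef
        have hKAng : K ∈ Ang :=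
          hAng.biprod_mem _ _ (hAng.trivial_mem _) (pairSeq_mem hAng hn Un)
        have hz0 : IsZero ((pairSeq (S := S) hn Un).obj 0) := by
          rw [pairSeq_obj0 hn Un]; exact isZero_zero T
        have hzl : IsZero ((trivialNSeq (S := S) (n := n) (d.obj 0)).obj (n-1)) := by
          rw [trivialNSeq_obj_ge2 (d.obj 0) (n-1) (by omega)]; exact isZero_zero T
        set ιK0 : d.obj 0 ≅ K.obj 0 := addZeroIso (d.obj 0) _ hz0 with hιK0
        set ιKs : Z ≅ K.obj (n-2) :=
          ζ ≪≫ biprod.mapIso (Iso.refl T₀) (eqToIso (pairSeq_objs hn Un).symm) with hιKs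
        set ιKl : d.obj (n-1) ≅ K.obj (n-1) :=
          σU.symm ≪≫ zeroAddIso (S.obj Un) _ hzl ≪≫
            biprod.mapIso (Iso.refl _) (eqToIso (pairSeq_objl hn Un).symm) with hιKl
        set K' := reshape3 hn K (d.obj 0) Z (d.obj (n-1)) ιK0 ιKs ιKl with hK'def
        have hK'Ang : K' ∈ Ang := reshape3_mem hn K _ _ _ ιK0 ιKs ιKl hAng hKAng
        have hobjs := hA K' hK'Ang (by rw [hK'def, reshape3_obj0]; exact hA1)
          (by rw [hK'def, reshape3_objl]; exact hAn) (n-2) (by omega)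
        rwa [hK'def, reshape3_objs] at hobjs
      -- Step 2 : the `E`-angle ẽ with last object `Z`
      set UT := S.objPreimage T₀ with hUTdef
      set σT : S.obj UT ≅ T₀ := S.objObjPreimageIso T₀ with hσTdef
      set J := pairSeq (S := S) hn UT with hJdef
      set eb := biprodSeq d J with hebdef
      have hebAng : eb ∈ Ang := hAng.biprod_mem _ _ hdA (pairSeq_mem hAng hn UT)
      have hzJ0 : IsZero (J.obj 0) := by
        rw [hJdef, pairSeq_obj0 hn UT]; exact isZero_zero T
      set ιE0 : d.obj 0 ≅ eb.obj 0 := addZeroIso (d.obj 0) _ hzJ0 with hιE0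
      set ιEl : Z ≅ eb.obj (n-1) :=
        ζ ≪≫ biprod.mapIso σT.symm σU ≪≫ biprod.braiding _ _ ≪≫
          biprod.mapIso (Iso.refl _) (eqToIso (pairSeq_objl hn UT).symm) with hιEl
      set et := reshape3 hn eb (d.obj 0) (eb.obj (n-2)) Z ιE0 (Iso.refl _) ιEl with hetdef
      have hetAng : et ∈ Ang := reshape3_mem hn eb _ _ _ ιE0 _ ιEl hAng hebAng
      have hetl : et.obj (n-1) = Z :=
        reshape3_objl hn eb (d.obj 0) (eb.obj (n-2)) Z ιE0 (Iso.refl _) ιEl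
      have hetDA : et ∈ DA Ang A := by
        refine ⟨hetAng, hA et hetAng ?_ ?_⟩
        · exact hA1
        · rw [hetl]; exact hZA
      obtain ⟨π, hπ⟩ := projHom d J (g3 eb (d.obj 0) (eb.obj (n-2)) Z)
        (σ3 hn eb (d.obj 0) (eb.obj (n-2)) Z ιE0 (Iso.refl _) ιEl)
      have hπ0 : π.app 0 = eqToHom (rfl : et.obj 0 = d.obj 0) := by
        rw [hπ 0, σ3_hom_0]
        simp only [hιE0, addZeroIso, eqToHom_refl, Category.comp_id, Category.id_comp,
          Category.assoc, biprod.lift_fst]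
        rfl
      have hetE : et ∈ E := hE.base_change d hd et hetDA π rfl hπ0
      have hπph : π.app (n-1) ≫ d.phantom = et.phantom := by
        have hcp := π.comm_phantom
        rw [hπ0] at hcp
        calc π.app (n-1) ≫ d.phantom
            = et.phantom ≫ S.map (eqToHom (rfl : et.obj 0 = d.obj 0)) := hcp
          _ = et.phantom := by
              rw [eqToHom_refl, show S.map (𝟙 (et.obj 0)) = 𝟙 (S.obj (et.obj 0))
                from S.map_id _]
              exact Category.comp_id _
      -- the phantom of ẽ as a morphism out of `S.obj W₀`
      set x : Z ⟶ S.obj (et.obj 0) := eqToHom hetl.symm ≫ et.phantom with hxdef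
      have hphE : phant E (S.map (S.preimage x)) := by
        refine ⟨et, hetE, hetl, rfl, ?_⟩
        rw [S.map_preimage, hxdef]
        simp
      have hFF := hC.2.2 (S.preimage x) hphE
      obtain ⟨f, hfF, hXf, hYf, hfe⟩ := hFF
      have hfA : f ∈ Ang := (hF.subset_DA hfF).1
      have hx : x ≫ S.map φ = eqToHom hXf.symm ≫ f.phantom ≫ eqToHom hYf := by
        rw [← hfe, S.map_comp, S.map_preimage]
      set ς : d.obj (n-1) ⟶ Z := σU.inv ≫ biprod.inr ≫ ζ.inv with hςdef
      have hkey : ς ≫ x = d.phantom := by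
        rw [hxdef, ← hπph, hπ (n-1), σ3_hom_last]
        rw [hςdef, hιEl]
        simp [biprod.inr_map_assoc, eqToHom_trans_assoc]
      set s₂ : d.obj (n-1) ⟶ f.obj (n-1) := ς ≫ eqToHom hXf.symm with hs₂def
      obtain ⟨G, hGAng, hP1, hP0, hGph, Θ, hΘ0⟩ := base_realize hAng hn hfA s₂
      have hGDA : G ∈ DA Ang A := by
        refine ⟨hGAng, hA G hGAng ?_ ?_⟩
        · rw [hP0]; exact (hF.subset_DA hfF).2 0 (by omega)
        · rw [hP1]; exact hAn
      have hGF : G ∈ F := hF.base_change f hfF G hGDA Θ hP0 hΘ0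
      refine ⟨G, hGF, hP1, (congrArg S.obj hP0).trans hYf, ?_⟩
      rw [hGph, hs₂def]
      simp only [Category.assoc, eqToHom_trans, eqToHom_trans_assoc, eqToHom_refl,
        Category.id_comp, Category.comp_id]
      rw [← hx]
      simp only [reassoc_of% hkey]
    · -- backward
      intro hP
      refine ⟨(hE.subset_DA hd).2 0 (by omega), hY, ?_⟩
      intro W h hhE
      obtain ⟨e, heE, hXe, hYe, heq⟩ := hhE
      have heA : e ∈ Ang := (hE.subset_DA heE).1
      have hdA : d ∈ Ang := (hE.subset_DA hd).1
      set j : e.obj 0 ⟶ d.obj 0 := S.preimage (eqToHom hYe) with hjdef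
      have hSj : S.map j = eqToHom hYe := S.map_preimage _
      haveI : IsIso (S.map j) := by rw [hSj]; infer_instance
      haveI : IsIso j := isIso_of_reflects_iso j S
      set ι : d.obj 0 ≅ e.obj 0 := (asIso j).symm with hιdef
      set et := reshape3 hn e (d.obj 0) (e.obj (n-2)) (e.obj (n-1)) ι (Iso.refl _)
        (Iso.refl _) with hetdef
      have hetAng : et ∈ Ang := reshape3_mem hn e _ _ _ ι _ _ hAng heA
      have het0 : et.obj 0 = d.obj 0 := rfl
      have hetl : et.obj (n-1) = e.obj (n-1) :=
        reshape3_objl hn e (d.obj 0) (e.obj (n-2)) (e.obj (n-1)) ι (Iso.refl _) (Iso.refl _)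
      have hetDA : et ∈ DA Ang A := by
        refine ⟨hetAng, fun i hi => ?_⟩
        by_cases h0 : i = 0
        · subst h0; rw [het0]; exact (hE.subset_DA hd).2 0 (by omega)
        · by_cases hs : i = n-2
          · subst hs
            rw [hetdef, reshape3_objs]
            exact (hE.subset_DA heE).2 (n-2) (by omega)
          · by_cases hl : i = n-1
            · subst hl; rw [hetl]; exact (hE.subset_DA heE).2 (n-1) (by omega)
            · rw [hetdef, reshape3_obj_other hn e _ _ _ ι _ _ i h0 hs hl]
              exact (hE.subset_DA heE).2 i hi
      have hetE : et ∈ E := by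
        refine hE.cobase_change e heE et hetDA
          (reshapeHomFrom e (g3 e (d.obj 0) (e.obj (n-2)) (e.obj (n-1)))
            (σ3 hn e (d.obj 0) (e.obj (n-2)) (e.obj (n-1)) ι (Iso.refl _) (Iso.refl _)))
          hetl.symm ?_
        show (σ3 hn e (d.obj 0) (e.obj (n-2)) (e.obj (n-1)) ι (Iso.refl _)
          (Iso.refl _) (n-1)).inv = _
        rw [σ3_inv_last]
        simp
      obtain ⟨gg, hgg⟩ := hEI.2.2 (et.mor 0) ⟨et, hetE, rfl, rfl, by simp⟩
      obtain ⟨Ψ, hΨ0, hΨ1, -⟩ := hAng.fill et d hetAng hdA (𝟙 (d.obj 0)) gg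
        (show (𝟙 (d.obj 0) : d.obj 0 ⟶ d.obj 0) ≫ d.mor 0 = et.mor 0 ≫ gg by
          simp [hgg])
      have hs : Ψ.app (n-1) ≫ d.phantom = et.phantom := by
        have hcp := Ψ.comm_phantom
        rw [hΨ0] at hcp
        calc Ψ.app (n-1) ≫ d.phantom = et.phantom ≫ S.map (𝟙 (d.obj 0)) := hcp
          _ = et.phantom := by
            rw [show S.map (𝟙 (d.obj 0)) = 𝟙 (S.obj (d.obj 0)) from S.map_id _]
            exact Category.comp_id _
      have hetph : et.phantom = eqToHom hetl ≫ e.phantom ≫ eqToHom hYe := by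
        show (reshape3 hn e (d.obj 0) (e.obj (n-2)) (e.obj (n-1)) ι (Iso.refl _)
          (Iso.refl _)).phantom = _
        rw [reshape3_phantom]
        rw [show ι.inv = j from rfl, hSj]
        simp [eqToHom_map]
      obtain ⟨f, hfF, hXf, hYf, hfe⟩ := hP
      have hfA : f ∈ Ang := (hF.subset_DA hfF).1
      set s₂ : S.obj W ⟶ f.obj (n-1) :=
        eqToHom hXe.symm ≫ eqToHom hetl.symm ≫ Ψ.app (n-1) ≫ eqToHom hXf.symm with hs₂def
      obtain ⟨G, hGAng, hP1, hP0, hGph, Θ, hΘ0⟩ := base_realize hAng hn hfA s₂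
      have hGDA : G ∈ DA Ang A := by
        refine ⟨hGAng, hA G hGAng ?_ ?_⟩
        · rw [hP0]; exact (hF.subset_DA hfF).2 0 (by omega)
        · rw [hP1, ← hXe]; exact (hE.subset_DA heE).2 (n-1) (by omega)
      have hGF : G ∈ F := hF.base_change f hfF G hGDA Θ hP0 hΘ0
      refine ⟨G, hGF, hP1, (congrArg S.obj hP0).trans hYf, ?_⟩
      have he3 : e.phantom ≫ eqToHom hYe = eqToHom hetl.symm ≫ Ψ.app (n-1) ≫ d.phantom := by
        rw [hs, hetph]
        simp [eqToHom_trans]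
      rw [S.map_comp, heq, hGph, hs₂def]
      simp only [Category.assoc, reassoc_of% he3, reassoc_of% hfe, hfe, eqToHom_trans,
        eqToHom_trans_assoc, eqToHom_refl, Category.id_comp, Category.comp_id]
end
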